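/- arXiv:2309.16156 — 6 statements merged into one kernel-verified Lean document; each statement's English description precedes it below -/
import Mathlib

section
/- Let G be a finite connected simple graph on n vertices with distance matrix D, and let w ∈ ℝⁿ be an entrywise nonnegative vector with D w = n·𝟏. Then for every vertex u of G, the entry of w at u satisfies w(u) ≤ (1/2)·‖w‖₁. -/
/-- If `G` is a finite connected simple graph on `n` vertices with distance
matrix `D` and `w ≥ 0` satisfies `D w = n·𝟏`, then every entry of `w` is at most
half of `‖w‖₁`. -/
theorem stmt_2 {V : Type*} [Fintype V] (G : SimpleGraph V) (hG : G.Connected)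
    (D : Matrix V V ℝ) (hD : ∀ a b, D a b = (G.dist a b : ℝ))
    (w : V → ℝ) (hw0 : ∀ i, 0 ≤ w i)
    (hw : D.mulVec w = fun _ => (Fintype.card V : ℝ)) :
    ∀ u : V, w u ≤ (1 / 2) * ∑ i, |w i| := by
  intro u
  classical
  have habs : ∑ i, |w i| = ∑ i, w i := by
    exact Finset.sum_congr rfl fun i _ => abs_of_nonneg (hw0 i)
  have hrow : ∀ a : V, ∑ v, D a v * w v = (Fintype.card V : ℝ) := by
    intro a
    have := congrFun hw a
    simpa [Matrix.mulVec, dotProduct] using this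
  -- V is nontrivial
  have hne : Nonempty V := hG.nonempty
  have hnt : Nontrivial V := by
    by_contra h
    have hsub : Subsingleton V := not_nontrivial_iff_subsingleton.mp h
    have h0 : ∑ v, D u v * w v = 0 := by
      apply Finset.sum_eq_zero
      intro v _
      have : v = u := Subsingleton.elim v u
      simp [this, hD, SimpleGraph.dist_self]
    have := hrow u
    rw [h0] at this
    have hc : 0 < Fintype.card V := Fintype.card_pos
    have : (0:ℝ) < Fintype.card V := by exact_mod_cast hc
    linarith [hrow u, h0]
  -- find a neighbor of u
  obtain ⟨v, hvu⟩ := exists_ne u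
  obtain ⟨p⟩ := hG u v
  have hnil : ¬ p.Nil := SimpleGraph.Walk.not_nil_of_ne (Ne.symm hvu)
  have hadj : G.Adj u (p.getVert 1) := p.adj_snd hnil
  set u' := p.getVert 1 with hu'
  -- key sum inequality
  have key : ∑ x, (D u x - 1 + (if x = u then 2 else 0)) * w x ≤ ∑ x, D u' x * w x := by
    apply Finset.sum_le_sum
    intro x _
    apply mul_le_mul_of_nonneg_right _ (hw0 x)
    by_cases hx : x = u
    · have h1 : G.dist u' u = 1 := SimpleGraph.dist_eq_one_iff_adj.mpr hadj.symm
      simp [hx, hD, h1, SimpleGraph.dist_self]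
      norm_num
    · have htri : G.dist u x ≤ G.dist u u' + G.dist u' x := hG.dist_triangle
      have h1 : G.dist u u' = 1 := SimpleGraph.dist_eq_one_iff_adj.mpr hadj
      rw [h1] at htri
      have : (G.dist u x : ℝ) ≤ 1 + G.dist u' x := by exact_mod_cast htri
      simp only [hD, hx, if_false]
      linarith
  have hexp : ∑ x, (D u x - 1 + (if x = u then 2 else 0)) * w x
      = (Fintype.card V : ℝ) - ∑ x, w x + 2 * w u := by
    have : ∀ x, (D u x - 1 + (if x = u then 2 else 0)) * w x
        = D u x * w x - w x + (if x = u then 2 * w x else 0) := by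
      intro x
      by_cases hx : x = u <;> simp [hx] <;> ring
    rw [Finset.sum_congr rfl fun x _ => this x]
    rw [Finset.sum_add_distrib, Finset.sum_sub_distrib, hrow u,
      Finset.sum_ite_eq' Finset.univ u (fun x => 2 * w x)]
    simp
  rw [hexp, hrow u'] at key
  rw [habs]
  linarith
end

section
/- Let G₁ and G₂ be finite connected simple graphs, each having at least two vertices, with distance matrices D₁, D₂ and constant curvatures K₁ > 0 and K₂ > 0 respectively (i.e., D₁(K₁·𝟏) = n₁·𝟏 and D₂(K₂·𝟏) = n₂·𝟏, where nᵢ = |V(Gᵢ)|). Suppose each Gᵢ is discrete Bonnet–Myers sharp, i.e., diam(Gᵢ)·Kᵢ = 2. Then the Cartesian (box) product G₁ □ G₂ has constant curvature K = K₁K₂/(K₁+K₂) and is discrete Bonnet–Myers sharp: diam(G₁ □ G₂)·K = 2. -/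
open SimpleGraph

/-- Lower bound: any walk in the box product is at least as long as the sum of the
coordinate distances. -/
lemma walk_length_ge {V₁ V₂ : Type*} {G₁ : SimpleGraph V₁} {G₂ : SimpleGraph V₂}
    (hG₁ : G₁.Connected) (hG₂ : G₂.Connected) {x y : V₁ × V₂}
    (w : (G₁.boxProd G₂).Walk x y) :
    G₁.dist x.1 y.1 + G₂.dist x.2 y.2 ≤ w.length := by
  induction w with
  | nil => simp
  | @cons a b c h w ih =>
    rw [SimpleGraph.boxProd_adj] at h
    rw [SimpleGraph.Walk.length_cons]
    rcases h with ⟨h1, h2⟩ | ⟨h2, h1⟩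
    · have t1 : G₁.dist a.1 c.1 ≤ G₁.dist a.1 b.1 + G₁.dist b.1 c.1 :=
        hG₁.dist_triangle
      have e1 : G₁.dist a.1 b.1 = 1 := SimpleGraph.dist_eq_one_iff_adj.mpr h1
      have e2 : G₂.dist a.2 c.2 = G₂.dist b.2 c.2 := by rw [h2]
      omega
    · have t1 : G₂.dist a.2 c.2 ≤ G₂.dist a.2 b.2 + G₂.dist b.2 c.2 :=
        hG₂.dist_triangle
      have e1 : G₂.dist a.2 b.2 = 1 := SimpleGraph.dist_eq_one_iff_adj.mpr h2
      have e2 : G₁.dist a.1 c.1 = G₁.dist b.1 c.1 := by rw [h1]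
      omega

/-- Distance in the box product is the sum of coordinate distances. -/
lemma boxProd_dist {V₁ V₂ : Type*} {G₁ : SimpleGraph V₁} {G₂ : SimpleGraph V₂}
    (hG₁ : G₁.Connected) (hG₂ : G₂.Connected) (x y : V₁ × V₂) :
    (G₁.boxProd G₂).dist x y = G₁.dist x.1 y.1 + G₂.dist x.2 y.2 := by
  apply le_antisymm
  · obtain ⟨p, hp⟩ := hG₁.exists_walk_length_eq_dist x.1 y.1
    obtain ⟨q, hq⟩ := hG₂.exists_walk_length_eq_dist x.2 y.2
    have := SimpleGraph.dist_le
      ((SimpleGraph.Walk.boxProdLeft G₂ x.2 p).append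
        (SimpleGraph.Walk.boxProdRight G₁ y.1 q))
    have e1 : (SimpleGraph.Walk.boxProdLeft G₂ x.2 p).length = p.length :=
      SimpleGraph.Walk.length_map _ _
    have e2 : (SimpleGraph.Walk.boxProdRight G₁ y.1 q).length = q.length :=
      SimpleGraph.Walk.length_map _ _
    rw [SimpleGraph.Walk.length_append, e1, e2] at this
    rw [hp, hq] at this
    simpa using this
  · obtain ⟨w, hw⟩ := (hG₁.boxProd hG₂).exists_walk_length_eq_dist x y
    calc G₁.dist x.1 y.1 + G₂.dist x.2 y.2 ≤ w.length := walk_length_ge hG₁ hG₂ w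
      _ = _ := hw

lemma ediam_ne_top_of_connected {V : Type*} [Fintype V] {G : SimpleGraph V}
    (hG : G.Connected) : G.ediam ≠ ⊤ := by
  have : Nonempty V := hG.nonempty
  obtain ⟨u, v, huv⟩ := SimpleGraph.exists_edist_eq_ediam_of_finite (G := G)
  rw [← huv]
  exact SimpleGraph.edist_ne_top_iff_reachable.mpr (hG.preconnected u v)

/-- The diameter of the box product is the sum of the diameters. -/
lemma boxProd_diam {V₁ V₂ : Type*} [Fintype V₁] [Fintype V₂]
    {G₁ : SimpleGraph V₁} {G₂ : SimpleGraph V₂}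
    (hG₁ : G₁.Connected) (hG₂ : G₂.Connected) :
    (G₁.boxProd G₂).diam = G₁.diam + G₂.diam := by
  have hbox : (G₁.boxProd G₂).Connected := hG₁.boxProd hG₂
  have h1 : G₁.ediam ≠ ⊤ := ediam_ne_top_of_connected hG₁
  have h2 : G₂.ediam ≠ ⊤ := ediam_ne_top_of_connected hG₂
  have hb : (G₁.boxProd G₂).ediam ≠ ⊤ := ediam_ne_top_of_connected hbox
  have n1 : Nonempty V₁ := hG₁.nonempty
  have n2 : Nonempty V₂ := hG₂.nonempty
  apply le_antisymm
  · obtain ⟨u, v, huv⟩ := SimpleGraph.exists_dist_eq_diam (G := G₁.boxProd G₂)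
    rw [← huv, boxProd_dist hG₁ hG₂]
    exact Nat.add_le_add (SimpleGraph.dist_le_diam h1) (SimpleGraph.dist_le_diam h2)
  · obtain ⟨u₁, v₁, h₁⟩ := SimpleGraph.exists_dist_eq_diam (G := G₁)
    obtain ⟨u₂, v₂, h₂⟩ := SimpleGraph.exists_dist_eq_diam (G := G₂)
    have := SimpleGraph.dist_le_diam hb (u := (u₁, u₂)) (v := (v₁, v₂))
    rw [boxProd_dist hG₁ hG₂, h₁, h₂] at this
    exact this

/-- If `G₁` and `G₂` are finite connected simple graphs (each with at least
two vertices) with constant curvatures `K₁, K₂ > 0` and each is discrete Bonnet–Myers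
sharp (`diam(Gᵢ)·Kᵢ = 2`), then the Cartesian (box) product `G₁ □ G₂` has constant
curvature `K = K₁K₂/(K₁+K₂)` and is discrete Bonnet–Myers sharp. -/
theorem stmt_3 {V₁ V₂ : Type*} [Fintype V₁] [Fintype V₂]
    (G₁ : SimpleGraph V₁) (G₂ : SimpleGraph V₂)
    (hG₁ : G₁.Connected) (hG₂ : G₂.Connected)
    (hn₁ : 2 ≤ Fintype.card V₁) (hn₂ : 2 ≤ Fintype.card V₂)
    (D₁ : Matrix V₁ V₁ ℝ) (hD₁ : ∀ a b, D₁ a b = (G₁.dist a b : ℝ))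
    (D₂ : Matrix V₂ V₂ ℝ) (hD₂ : ∀ a b, D₂ a b = (G₂.dist a b : ℝ))
    (K₁ K₂ : ℝ) (hK₁ : 0 < K₁) (hK₂ : 0 < K₂)
    (hc₁ : D₁.mulVec (fun _ => K₁) = fun _ => (Fintype.card V₁ : ℝ))
    (hc₂ : D₂.mulVec (fun _ => K₂) = fun _ => (Fintype.card V₂ : ℝ))
    (hs₁ : (G₁.diam : ℝ) * K₁ = 2) (hs₂ : (G₂.diam : ℝ) * K₂ = 2) :
    (Matrix.of fun a b : V₁ × V₂ => ((G₁.boxProd G₂).dist a b : ℝ)).mulVec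
        (fun _ => K₁ * K₂ / (K₁ + K₂)) = (fun _ => (Fintype.card (V₁ × V₂) : ℝ)) ∧
      ((G₁.boxProd G₂).diam : ℝ) * (K₁ * K₂ / (K₁ + K₂)) = 2 := by
  have hK₁' : K₁ ≠ 0 := ne_of_gt hK₁
  have hK₂' : K₂ ≠ 0 := ne_of_gt hK₂
  have hK₁₂ : K₁ + K₂ ≠ 0 := ne_of_gt (add_pos hK₁ hK₂)
  -- row sums of the distance matrices
  have hS₁ : ∀ a : V₁, ∑ b, (G₁.dist a b : ℝ) = (Fintype.card V₁ : ℝ) / K₁ := by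
    intro a
    have := congrFun hc₁ a
    simp only [Matrix.mulVec, dotProduct] at this
    simp only [hD₁] at this
    rw [eq_div_iff hK₁', Finset.sum_mul]
    exact this
  have hS₂ : ∀ a : V₂, ∑ b, (G₂.dist a b : ℝ) = (Fintype.card V₂ : ℝ) / K₂ := by
    intro a
    have := congrFun hc₂ a
    simp only [Matrix.mulVec, dotProduct] at this
    simp only [hD₂] at this
    rw [eq_div_iff hK₂', Finset.sum_mul]
    exact this
  constructor
  · funext x
    simp only [Matrix.mulVec, dotProduct, Matrix.of_apply]
    have hd : ∀ y : V₁ × V₂,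
        ((G₁.boxProd G₂).dist x y : ℝ) = (G₁.dist x.1 y.1 : ℝ) + (G₂.dist x.2 y.2 : ℝ) := by
      intro y
      rw [boxProd_dist hG₁ hG₂]
      push_cast
      ring
    calc ∑ y : V₁ × V₂, ((G₁.boxProd G₂).dist x y : ℝ) * (K₁ * K₂ / (K₁ + K₂))
        = (∑ y : V₁ × V₂, ((G₁.dist x.1 y.1 : ℝ) + (G₂.dist x.2 y.2 : ℝ))) *
            (K₁ * K₂ / (K₁ + K₂)) := by
          rw [Finset.sum_mul]
          exact Finset.sum_congr rfl fun y _ => by rw [hd y]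
      _ = ((Fintype.card V₂ : ℝ) * ((Fintype.card V₁ : ℝ) / K₁) +
            (Fintype.card V₁ : ℝ) * ((Fintype.card V₂ : ℝ) / K₂)) *
            (K₁ * K₂ / (K₁ + K₂)) := by
          congr 1
          rw [Fintype.sum_prod_type]
          simp only [Finset.sum_add_distrib, Finset.sum_const, Finset.card_univ, nsmul_eq_mul]
          rw [← Finset.mul_sum, hS₁, hS₂]
      _ = (Fintype.card (V₁ × V₂) : ℝ) := by
          rw [Fintype.card_prod]
          push_cast
          field_simp
          ring
  · rw [boxProd_diam hG₁ hG₂]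
    push_cast
    have h₁ : (G₁.diam : ℝ) = 2 / K₁ := by
      field_simp at hs₁ ⊢; linarith
    have h₂ : (G₂.diam : ℝ) = 2 / K₂ := by
      field_simp at hs₂ ⊢; linarith
    rw [h₁, h₂]
    field_simp
    ring
end

section
/- Let G₁ and G₂ be finite connected simple graphs with n₁ and n₂ vertices and distance matrices D₁, D₂, and suppose each Gᵢ has a nonnegative curvature, i.e., there exist entrywise nonnegative wᵢ with Dᵢwᵢ = nᵢ·𝟏. Let G be the graph obtained by adding an edge e = {u,v} between G₁ and G₂, where u ∈ V(G₁) and v ∈ V(G₂). Then G has a curvature w (i.e., D_G w = (n₁+n₂)·𝟏, where D_G is the distance matrix of G) which is nonpositive at u and at v and nonnegative at every other vertex. -/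
/-- The graph obtained by adding an edge between the vertex `u` of `G₁` and the
vertex `v` of `G₂` (the graphs being on disjoint vertex sets). -/
def bridgeGraph {V₁ V₂ : Type*} (G₁ : SimpleGraph V₁) (G₂ : SimpleGraph V₂)
    (u : V₁) (v : V₂) : SimpleGraph (V₁ ⊕ V₂) :=
  SimpleGraph.fromRel (fun x y =>
    (∃ a b, x = Sum.inl a ∧ y = Sum.inl b ∧ G₁.Adj a b) ∨
    (∃ a b, x = Sum.inr a ∧ y = Sum.inr b ∧ G₂.Adj a b) ∨
    (x = Sum.inl u ∧ y = Sum.inr v))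

section Aux

variable {V₁ V₂ : Type*} {G₁ : SimpleGraph V₁} {G₂ : SimpleGraph V₂} {u : V₁} {v : V₂}

lemma bridge_adj_inl {a b : V₁} (h : G₁.Adj a b) :
    (bridgeGraph G₁ G₂ u v).Adj (Sum.inl a) (Sum.inl b) := by
  rw [bridgeGraph, SimpleGraph.fromRel_adj]
  exact ⟨by simpa using h.ne, Or.inl (Or.inl ⟨a, b, rfl, rfl, h⟩)⟩

lemma bridge_adj_inr {a b : V₂} (h : G₂.Adj a b) :
    (bridgeGraph G₁ G₂ u v).Adj (Sum.inr a) (Sum.inr b) := by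
  rw [bridgeGraph, SimpleGraph.fromRel_adj]
  exact ⟨by simpa using h.ne, Or.inl (Or.inr (Or.inl ⟨a, b, rfl, rfl, h⟩))⟩

lemma bridge_adj_cross :
    (bridgeGraph G₁ G₂ u v).Adj (Sum.inl u) (Sum.inr v) := by
  rw [bridgeGraph, SimpleGraph.fromRel_adj]
  exact ⟨by simp, Or.inl (Or.inr (Or.inr ⟨rfl, rfl⟩))⟩

lemma bridge_adj_cases {x z : V₁ ⊕ V₂} (h : (bridgeGraph G₁ G₂ u v).Adj x z) :
    (∃ a b, x = Sum.inl a ∧ z = Sum.inl b ∧ G₁.Adj a b) ∨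
    (∃ a b, x = Sum.inr a ∧ z = Sum.inr b ∧ G₂.Adj a b) ∨
    (x = Sum.inl u ∧ z = Sum.inr v) ∨ (x = Sum.inr v ∧ z = Sum.inl u) := by
  rw [bridgeGraph, SimpleGraph.fromRel_adj] at h
  obtain ⟨hne, h | h⟩ := h
  · rcases h with ⟨a, b, rfl, rfl, hab⟩ | ⟨a, b, rfl, rfl, hab⟩ | ⟨rfl, rfl⟩
    · exact Or.inl ⟨a, b, rfl, rfl, hab⟩
    · exact Or.inr (Or.inl ⟨a, b, rfl, rfl, hab⟩)
    · exact Or.inr (Or.inr (Or.inl ⟨rfl, rfl⟩))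
  · rcases h with ⟨a, b, rfl, rfl, hab⟩ | ⟨a, b, rfl, rfl, hab⟩ | ⟨rfl, rfl⟩
    · exact Or.inl ⟨b, a, rfl, rfl, hab.symm⟩
    · exact Or.inr (Or.inl ⟨b, a, rfl, rfl, hab.symm⟩)
    · exact Or.inr (Or.inr (Or.inr ⟨rfl, rfl⟩))

/-- The homomorphism from `G₁` into the bridge graph. -/
def bridgeInlHom (G₁ : SimpleGraph V₁) (G₂ : SimpleGraph V₂) (u : V₁) (v : V₂) :
    G₁ →g bridgeGraph G₁ G₂ u v where
  toFun := Sum.inl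
  map_rel' := fun h => bridge_adj_inl h

/-- The homomorphism from `G₂` into the bridge graph. -/
def bridgeInrHom (G₁ : SimpleGraph V₁) (G₂ : SimpleGraph V₂) (u : V₁) (v : V₂) :
    G₂ →g bridgeGraph G₁ G₂ u v where
  toFun := Sum.inr
  map_rel' := fun h => bridge_adj_inr h

/-- Candidate distance function on the bridge graph. -/
noncomputable def bridgeD (G₁ : SimpleGraph V₁) (G₂ : SimpleGraph V₂) (u : V₁) (v : V₂) :
    V₁ ⊕ V₂ → V₁ ⊕ V₂ → ℕ
  | Sum.inl a, Sum.inl b => G₁.dist a b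
  | Sum.inl a, Sum.inr b => G₁.dist a u + 1 + G₂.dist v b
  | Sum.inr a, Sum.inl b => G₂.dist a v + 1 + G₁.dist u b
  | Sum.inr a, Sum.inr b => G₂.dist a b

lemma bridgeD_le_length (hG₁ : G₁.Connected) (hG₂ : G₂.Connected) {x y : V₁ ⊕ V₂}
    (p : (bridgeGraph G₁ G₂ u v).Walk x y) :
    bridgeD G₁ G₂ u v x y ≤ p.length := by
  induction p with
  | @nil x => cases x <;> simp [bridgeD, SimpleGraph.dist_self]
  | @cons x z y h p ih =>
    rw [SimpleGraph.Walk.length_cons]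
    have key : bridgeD G₁ G₂ u v x y ≤ bridgeD G₁ G₂ u v z y + 1 := by
      rcases bridge_adj_cases h with ⟨a, c, rfl, rfl, hac⟩ | ⟨a, c, rfl, rfl, hac⟩ |
        ⟨rfl, rfl⟩ | ⟨rfl, rfl⟩
      · have h1 : ∀ b, G₁.dist a b ≤ G₁.dist c b + 1 := fun b => by
          have ht := hG₁.dist_triangle (u := a) (v := c) (w := b)
          have h2 : G₁.dist a c = 1 := SimpleGraph.dist_eq_one_iff_adj.mpr hac
          omega
        cases y with
        | inl b => simpa [bridgeD] using h1 b
        | inr b =>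
          have := h1 u
          simp only [bridgeD]
          omega
      · have h1 : ∀ b, G₂.dist a b ≤ G₂.dist c b + 1 := fun b => by
          have ht := hG₂.dist_triangle (u := a) (v := c) (w := b)
          have h2 : G₂.dist a c = 1 := SimpleGraph.dist_eq_one_iff_adj.mpr hac
          omega
        cases y with
        | inl b =>
          have := h1 v
          simp only [bridgeD]
          omega
        | inr b => simpa [bridgeD] using h1 b
      · cases y with
        | inl b => simp only [bridgeD]; omega
        | inr b =>
          simp only [bridgeD, SimpleGraph.dist_self]
          omega
      · cases y with
        | inl b =>
          simp only [bridgeD, SimpleGraph.dist_self]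
          omega
        | inr b => simp only [bridgeD]; omega
    omega

lemma bridge_dist_ll (hG₁ : G₁.Connected) (hG₂ : G₂.Connected) (a b : V₁) :
    (bridgeGraph G₁ G₂ u v).dist (Sum.inl a) (Sum.inl b) = G₁.dist a b := by
  obtain ⟨p, hp⟩ := hG₁.exists_walk_length_eq_dist a b
  have hub : (bridgeGraph G₁ G₂ u v).dist (Sum.inl a) (Sum.inl b) ≤ G₁.dist a b := by
    have := SimpleGraph.dist_le (p.map (bridgeInlHom G₁ G₂ u v))
    simpa [SimpleGraph.Walk.length_map, hp, bridgeInlHom] using this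
  have hreach : (bridgeGraph G₁ G₂ u v).Reachable (Sum.inl a) (Sum.inl b) :=
    ⟨p.map (bridgeInlHom G₁ G₂ u v)⟩
  obtain ⟨q, hq⟩ := hreach.exists_walk_length_eq_dist
  have hlb := bridgeD_le_length hG₁ hG₂ q
  rw [hq] at hlb
  simp only [bridgeD] at hlb
  omega

lemma bridge_dist_rr (hG₁ : G₁.Connected) (hG₂ : G₂.Connected) (a b : V₂) :
    (bridgeGraph G₁ G₂ u v).dist (Sum.inr a) (Sum.inr b) = G₂.dist a b := by
  obtain ⟨p, hp⟩ := hG₂.exists_walk_length_eq_dist a b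
  have hub : (bridgeGraph G₁ G₂ u v).dist (Sum.inr a) (Sum.inr b) ≤ G₂.dist a b := by
    have := SimpleGraph.dist_le (p.map (bridgeInrHom G₁ G₂ u v))
    simpa [SimpleGraph.Walk.length_map, hp, bridgeInrHom] using this
  have hreach : (bridgeGraph G₁ G₂ u v).Reachable (Sum.inr a) (Sum.inr b) :=
    ⟨p.map (bridgeInrHom G₁ G₂ u v)⟩
  obtain ⟨q, hq⟩ := hreach.exists_walk_length_eq_dist
  have hlb := bridgeD_le_length hG₁ hG₂ q
  rw [hq] at hlb
  simp only [bridgeD] at hlb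
  omega

lemma bridge_dist_lr (hG₁ : G₁.Connected) (hG₂ : G₂.Connected) (a : V₁) (b : V₂) :
    (bridgeGraph G₁ G₂ u v).dist (Sum.inl a) (Sum.inr b)
      = G₁.dist a u + 1 + G₂.dist v b := by
  obtain ⟨p, hp⟩ := hG₁.exists_walk_length_eq_dist a u
  obtain ⟨q, hq⟩ := hG₂.exists_walk_length_eq_dist v b
  set W : (bridgeGraph G₁ G₂ u v).Walk (Sum.inl a) (Sum.inr b) :=
    (p.map (bridgeInlHom G₁ G₂ u v)).append
      (SimpleGraph.Walk.cons bridge_adj_cross (q.map (bridgeInrHom G₁ G₂ u v))) with hW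
  have hWlen : W.length = G₁.dist a u + 1 + G₂.dist v b := by
    rw [hW]
    erw [SimpleGraph.Walk.length_append, SimpleGraph.Walk.length_map,
      SimpleGraph.Walk.length_cons, SimpleGraph.Walk.length_map, hp, hq]
    omega
  have hub := SimpleGraph.dist_le W
  rw [hWlen] at hub
  have hreach : (bridgeGraph G₁ G₂ u v).Reachable (Sum.inl a) (Sum.inr b) := ⟨W⟩
  obtain ⟨r, hr⟩ := hreach.exists_walk_length_eq_dist
  have hlb := bridgeD_le_length hG₁ hG₂ r
  rw [hr] at hlb
  simp only [bridgeD] at hlb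
  omega

lemma bridge_dist_rl (hG₁ : G₁.Connected) (hG₂ : G₂.Connected) (a : V₂) (b : V₁) :
    (bridgeGraph G₁ G₂ u v).dist (Sum.inr a) (Sum.inl b)
      = G₁.dist b u + 1 + G₂.dist v a := by
  rw [SimpleGraph.dist_comm, bridge_dist_lr hG₁ hG₂]

/-- In a graph with a nonnegative curvature, no vertex carries more than half of the
total curvature mass. -/
lemma half_mass {V : Type*} [Fintype V] {G : SimpleGraph V} (hG : G.Connected)
    {w : V → ℝ} (hw0 : ∀ i, 0 ≤ w i)
    (hrow : ∀ a : V, ∑ i, (G.dist a i : ℝ) * w i = (Fintype.card V : ℝ)) (u : V) :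
    w u ≤ (∑ i, w i) / 2 := by
  classical
  have hcard : (0 : ℝ) < (Fintype.card V : ℝ) := by
    have : Nonempty V := hG.nonempty
    exact_mod_cast Fintype.card_pos
  -- find a neighbour of u
  obtain ⟨a, hadj⟩ : ∃ a, G.Adj u a := by
    have hne : ∑ i, (G.dist u i : ℝ) * w i ≠ 0 := by rw [hrow u]; positivity
    obtain ⟨i, hi⟩ : ∃ i, (G.dist u i : ℝ) * w i ≠ 0 := by
      by_contra hc
      push_neg at hc
      exact hne (Finset.sum_eq_zero fun i _ => hc i)
    have hdi : G.dist u i ≠ 0 := by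
      intro h0
      rw [h0] at hi
      simp at hi
    have hne' : u ≠ i := fun h => hdi (h ▸ SimpleGraph.dist_self)
    obtain ⟨p⟩ := hG u i
    cases p with
    | nil => exact absurd rfl hne'
    | cons h q => exact ⟨_, h⟩
  have hd1 : G.dist a u = 1 := SimpleGraph.dist_eq_one_iff_adj.mpr hadj.symm
  have hpt : ∀ i, (G.dist u i : ℝ) * w i - w i + (if i = u then 2 * w u else 0)
      ≤ (G.dist a i : ℝ) * w i := by
    intro i
    by_cases hi : i = u
    · subst hi
      rw [if_pos rfl, hd1, SimpleGraph.dist_self]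
      push_cast
      linarith
    · rw [if_neg hi, add_zero]
      have htri : G.dist u i ≤ G.dist a i + 1 := by
        have ht := hG.dist_triangle (u := u) (v := a) (w := i)
        have h2 : G.dist u a = 1 := SimpleGraph.dist_eq_one_iff_adj.mpr hadj
        omega
      have htri' : (G.dist u i : ℝ) ≤ (G.dist a i : ℝ) + 1 := by exact_mod_cast htri
      nlinarith [hw0 i]
  have hsum := Finset.sum_le_sum (s := Finset.univ) (fun i _ => hpt i)
  rw [hrow a] at hsum
  have hsplit : ∑ i, ((G.dist u i : ℝ) * w i - w i + (if i = u then 2 * w u else 0))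
      = (Fintype.card V : ℝ) - (∑ i, w i) + 2 * w u := by
    rw [Finset.sum_add_distrib, Finset.sum_sub_distrib, hrow u,
      Finset.sum_ite_eq' Finset.univ u (fun _ => 2 * w u)]
    simp
  rw [hsplit] at hsum
  linarith

lemma sumlem {V : Type*} [Fintype V] [DecidableEq V] (d w : V → ℝ) (c k : ℝ) (z : V) :
    ∑ i, d i * (c * w i - (if i = z then k else 0))
      = c * (∑ i, d i * w i) - d z * k := by
  rw [show (fun i => d i * (c * w i - (if i = z then k else 0)))
      = fun i => c * (d i * w i) - (if i = z then d i * k else 0) by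
    funext i; by_cases h : i = z <;> simp [h] <;> ring]
  rw [Finset.sum_sub_distrib, ← Finset.mul_sum,
    Finset.sum_ite_eq' Finset.univ z (fun i => d i * k)]
  simp

end Aux

/-- If `G₁`, `G₂` are finite connected simple graphs with nonnegative
curvatures, then the graph obtained by adding an edge `{u,v}` between them has a
curvature which is nonpositive at `u` and `v` and nonnegative at every other vertex. -/
theorem stmt_4 {V₁ V₂ : Type*} [Fintype V₁] [Fintype V₂]
    (G₁ : SimpleGraph V₁) (G₂ : SimpleGraph V₂)
    (hG₁ : G₁.Connected) (hG₂ : G₂.Connected)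
    (D₁ : Matrix V₁ V₁ ℝ) (hD₁ : ∀ a b, D₁ a b = (G₁.dist a b : ℝ))
    (D₂ : Matrix V₂ V₂ ℝ) (hD₂ : ∀ a b, D₂ a b = (G₂.dist a b : ℝ))
    (w₁ : V₁ → ℝ) (hw₁0 : ∀ i, 0 ≤ w₁ i)
    (hw₁ : D₁.mulVec w₁ = fun _ => (Fintype.card V₁ : ℝ))
    (w₂ : V₂ → ℝ) (hw₂0 : ∀ i, 0 ≤ w₂ i)
    (hw₂ : D₂.mulVec w₂ = fun _ => (Fintype.card V₂ : ℝ))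
    (u : V₁) (v : V₂) :
    ∃ w : V₁ ⊕ V₂ → ℝ,
      (Matrix.of fun a b => ((bridgeGraph G₁ G₂ u v).dist a b : ℝ)).mulVec w
          = (fun _ => ((Fintype.card V₁ : ℝ) + (Fintype.card V₂ : ℝ))) ∧
        w (Sum.inl u) ≤ 0 ∧ w (Sum.inr v) ≤ 0 ∧
        ∀ x, x ≠ Sum.inl u → x ≠ Sum.inr v → 0 ≤ w x := by
  classical
  have hne₁ : Nonempty V₁ := hG₁.nonempty
  have hne₂ : Nonempty V₂ := hG₂.nonempty
  set n₁ : ℝ := (Fintype.card V₁ : ℝ) with hn₁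
  set n₂ : ℝ := (Fintype.card V₂ : ℝ) with hn₂
  have hn₁pos : 0 < n₁ := by rw [hn₁]; exact_mod_cast Fintype.card_pos
  have hn₂pos : 0 < n₂ := by rw [hn₂]; exact_mod_cast Fintype.card_pos
  have row₁ : ∀ a : V₁, ∑ i, (G₁.dist a i : ℝ) * w₁ i = n₁ := by
    intro a
    have := congrFun hw₁ a
    simpa [Matrix.mulVec, dotProduct, hD₁] using this
  have row₂ : ∀ a : V₂, ∑ i, (G₂.dist a i : ℝ) * w₂ i = n₂ := by
    intro a
    have := congrFun hw₂ a
    simpa [Matrix.mulVec, dotProduct, hD₂] using this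
  set s₁ : ℝ := ∑ i, w₁ i with hs₁
  set s₂ : ℝ := ∑ i, w₂ i with hs₂
  have hs₁pos : 0 < s₁ := by
    rcases (Finset.sum_nonneg fun i _ => hw₁0 i : (0:ℝ) ≤ s₁).lt_or_eq with h | h
    · exact h
    · exfalso
      have hz : ∀ i ∈ Finset.univ, w₁ i = 0 :=
        (Finset.sum_eq_zero_iff_of_nonneg fun i _ => hw₁0 i).mp h.symm
      have := row₁ (Classical.arbitrary V₁)
      rw [Finset.sum_eq_zero (fun i _ => by rw [hz i (Finset.mem_univ i), mul_zero])] at this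
      linarith
  have hs₂pos : 0 < s₂ := by
    rcases (Finset.sum_nonneg fun i _ => hw₂0 i : (0:ℝ) ≤ s₂).lt_or_eq with h | h
    · exact h
    · exfalso
      have hz : ∀ i ∈ Finset.univ, w₂ i = 0 :=
        (Finset.sum_eq_zero_iff_of_nonneg fun i _ => hw₂0 i).mp h.symm
      have := row₂ (Classical.arbitrary V₂)
      rw [Finset.sum_eq_zero (fun i _ => by rw [hz i (Finset.mem_univ i), mul_zero])] at this
      linarith
  have hs₁0 : s₁ ≠ 0 := ne_of_gt hs₁pos
  have hs₂0 : s₂ ≠ 0 := ne_of_gt hs₂pos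
  set Δ : ℝ := n₁ / s₁ + n₂ / s₂ + 1 / 2 with hΔ
  have hΔpos : 0 < Δ := by rw [hΔ]; positivity
  set t : ℝ := (n₁ + n₂) / Δ with ht
  have htpos : 0 < t := by rw [ht]; positivity
  have htΔ : t * Δ = n₁ + n₂ := by rw [ht]; exact div_mul_cancel₀ _ (ne_of_gt hΔpos)
  have row₁u : ∑ i, (G₁.dist i u : ℝ) * w₁ i = n₁ :=
    (Finset.sum_congr rfl fun i _ => by rw [SimpleGraph.dist_comm]).trans (row₁ u)
  refine ⟨Sum.elim (fun i => t / s₁ * w₁ i - (if i = u then t / 2 else 0))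
    (fun j => t / s₂ * w₂ j - (if j = v then t / 2 else 0)), ?_, ?_, ?_, ?_⟩
  · funext x
    cases x with
    | inl a =>
      show (∑ y : V₁ ⊕ V₂, ((bridgeGraph G₁ G₂ u v).dist (Sum.inl a) y : ℝ) *
        (Sum.elim (fun i => t / s₁ * w₁ i - (if i = u then t / 2 else 0))
          (fun j => t / s₂ * w₂ j - (if j = v then t / 2 else 0))) y) = n₁ + n₂
      rw [Fintype.sum_sum_type]
      simp only [Sum.elim_inl, Sum.elim_inr, bridge_dist_ll hG₁ hG₂, bridge_dist_lr hG₁ hG₂]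
      push_cast
      rw [sumlem (fun i => (G₁.dist a i : ℝ)) w₁ (t / s₁) (t / 2) u,
        sumlem (fun j => ((G₁.dist a u : ℝ) + 1 + (G₂.dist v j : ℝ))) w₂ (t / s₂) (t / 2) v,
        row₁ a]
      have hq : ∑ j, ((G₁.dist a u : ℝ) + 1 + (G₂.dist v j : ℝ)) * w₂ j
          = ((G₁.dist a u : ℝ) + 1) * s₂ + n₂ := by
        rw [show (fun j => ((G₁.dist a u : ℝ) + 1 + (G₂.dist v j : ℝ)) * w₂ j)
            = fun j => ((G₁.dist a u : ℝ) + 1) * w₂ j + (G₂.dist v j : ℝ) * w₂ j by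
          funext j; ring]
        rw [Finset.sum_add_distrib, ← Finset.mul_sum, row₂ v, ← hs₂]
      rw [hq, show ((G₂.dist v v : ℝ)) = 0 by rw [SimpleGraph.dist_self]; norm_num]
      rw [← htΔ, hΔ]
      field_simp
      ring
    | inr b =>
      show (∑ y : V₁ ⊕ V₂, ((bridgeGraph G₁ G₂ u v).dist (Sum.inr b) y : ℝ) *
        (Sum.elim (fun i => t / s₁ * w₁ i - (if i = u then t / 2 else 0))
          (fun j => t / s₂ * w₂ j - (if j = v then t / 2 else 0))) y) = n₁ + n₂
      rw [Fintype.sum_sum_type]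
      simp only [Sum.elim_inl, Sum.elim_inr, bridge_dist_rr hG₁ hG₂, bridge_dist_rl hG₁ hG₂]
      push_cast
      rw [sumlem (fun i => ((G₁.dist i u : ℝ) + 1 + (G₂.dist v b : ℝ))) w₁ (t / s₁) (t / 2) u,
        sumlem (fun j => (G₂.dist b j : ℝ)) w₂ (t / s₂) (t / 2) v,
        row₂ b]
      have hq : ∑ i, ((G₁.dist i u : ℝ) + 1 + (G₂.dist v b : ℝ)) * w₁ i
          = ((G₂.dist v b : ℝ) + 1) * s₁ + n₁ := by
        rw [show (fun i => ((G₁.dist i u : ℝ) + 1 + (G₂.dist v b : ℝ)) * w₁ i)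
            = fun i => ((G₂.dist v b : ℝ) + 1) * w₁ i + (G₁.dist i u : ℝ) * w₁ i by
          funext i; ring]
        rw [Finset.sum_add_distrib, ← Finset.mul_sum, row₁u, ← hs₁]
      rw [hq, show ((G₁.dist u u : ℝ)) = 0 by rw [SimpleGraph.dist_self]; norm_num,
        show G₂.dist b v = G₂.dist v b from SimpleGraph.dist_comm]
      rw [← htΔ, hΔ]
      field_simp
      ring
  · show t / s₁ * w₁ u - (if u = u then t / 2 else 0) ≤ 0
    rw [if_pos rfl]
    have hhalf : w₁ u ≤ s₁ / 2 := half_mass hG₁ hw₁0 row₁ u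
    have h1 : t / s₁ * w₁ u ≤ t / s₁ * (s₁ / 2) :=
      mul_le_mul_of_nonneg_left hhalf (by positivity)
    have h2 : t / s₁ * (s₁ / 2) = t / 2 := by field_simp
    linarith
  · show t / s₂ * w₂ v - (if v = v then t / 2 else 0) ≤ 0
    rw [if_pos rfl]
    have hhalf : w₂ v ≤ s₂ / 2 := half_mass hG₂ hw₂0 row₂ v
    have h1 : t / s₂ * w₂ v ≤ t / s₂ * (s₂ / 2) :=
      mul_le_mul_of_nonneg_left hhalf (by positivity)
    have h2 : t / s₂ * (s₂ / 2) = t / 2 := by field_simp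
    linarith
  · rintro (i | j) hx hy
    · have hi : i ≠ u := fun h => hx (by rw [h])
      show 0 ≤ t / s₁ * w₁ i - (if i = u then t / 2 else 0)
      rw [if_neg hi, sub_zero]
      exact mul_nonneg (by positivity) (hw₁0 i)
    · have hj : j ≠ v := fun h => hy (by rw [h])
      show 0 ≤ t / s₂ * w₂ j - (if j = v then t / 2 else 0)
      rw [if_neg hj, sub_zero]
      exact mul_nonneg (by positivity) (hw₂0 j)
end

section
/- Let G₁ and G₂ be finite connected simple graphs with n₁ and n₂ vertices, distance matrices D₁, D₂, and suppose each Gᵢ has a nonnegative curvature (an entrywise nonnegative wᵢ with Dᵢwᵢ = nᵢ·𝟏). Let H be the graph obtained by adding an edge between a vertex u ∈ V(G₁) and a vertex v ∈ V(G₂) and then contracting this edge (so H has n₁+n₂−1 vertices, with u and v identified). Then H has a curvature w (D_H w = (n₁+n₂−1)·𝟏) which is nonnegative at every vertex except possibly the merged vertex. -/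
/-- The graph obtained by merging `G₁` and `G₂` at a vertex: add an edge between
`u ∈ V(G₁)` and `v ∈ V(G₂)` and contract it, identifying `u` and `v`.  The merged
vertex is represented by `Sum.inl u`. -/
def mergeGraph {V₁ V₂ : Type*} (G₁ : SimpleGraph V₁) (G₂ : SimpleGraph V₂)
    (u : V₁) (v : V₂) : SimpleGraph (V₁ ⊕ {y : V₂ // y ≠ v}) :=
  SimpleGraph.fromRel (fun x y =>
    (∃ a b, x = Sum.inl a ∧ y = Sum.inl b ∧ G₁.Adj a b) ∨
    (∃ a b, x = Sum.inr a ∧ y = Sum.inr b ∧ G₂.Adj a.1 b.1) ∨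
    (∃ b, x = Sum.inl u ∧ y = Sum.inr b ∧ G₂.Adj v b.1))

namespace MergeAux

variable {V₁ V₂ : Type*} {G₁ : SimpleGraph V₁} {G₂ : SimpleGraph V₂} {u : V₁} {v : V₂}

lemma adj_cases {x y : V₁ ⊕ {y : V₂ // y ≠ v}} (h : (mergeGraph G₁ G₂ u v).Adj x y) :
    (∃ a b, x = Sum.inl a ∧ y = Sum.inl b ∧ G₁.Adj a b) ∨
    (∃ a b, x = Sum.inr a ∧ y = Sum.inr b ∧ G₂.Adj a.1 b.1) ∨
    (∃ b, x = Sum.inl u ∧ y = Sum.inr b ∧ G₂.Adj v b.1) ∨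
    (∃ b, x = Sum.inr b ∧ y = Sum.inl u ∧ G₂.Adj v b.1) := by
  rw [mergeGraph, SimpleGraph.fromRel_adj] at h
  obtain ⟨-, h | h⟩ := h
  · rcases h with ⟨a, b, hx, hy, hab⟩ | ⟨a, b, hx, hy, hab⟩ | ⟨b, hx, hy, hb⟩
    · exact Or.inl ⟨a, b, hx, hy, hab⟩
    · exact Or.inr (Or.inl ⟨a, b, hx, hy, hab⟩)
    · exact Or.inr (Or.inr (Or.inl ⟨b, hx, hy, hb⟩))
  · rcases h with ⟨a, b, hy, hx, hab⟩ | ⟨a, b, hy, hx, hab⟩ | ⟨b, hy, hx, hb⟩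
    · exact Or.inl ⟨b, a, hx, hy, hab.symm⟩
    · exact Or.inr (Or.inl ⟨b, a, hx, hy, hab.symm⟩)
    · exact Or.inr (Or.inr (Or.inr ⟨b, hx, hy, hb⟩))

lemma adj_inl {a b : V₁} (h : G₁.Adj a b) :
    (mergeGraph G₁ G₂ u v).Adj (Sum.inl a) (Sum.inl b) := by
  rw [mergeGraph, SimpleGraph.fromRel_adj]
  exact ⟨by simpa using h.ne, Or.inl (Or.inl ⟨a, b, rfl, rfl, h⟩)⟩

def hom₁ (G₁ : SimpleGraph V₁) (G₂ : SimpleGraph V₂) (u : V₁) (v : V₂) :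
    G₁ →g mergeGraph G₁ G₂ u v :=
  ⟨Sum.inl, fun h => adj_inl h⟩

variable [DecidableEq V₂]

/-- the canonical inclusion of `V₂` -/
def ι₂ (u : V₁) (v : V₂) (y : V₂) : V₁ ⊕ {y : V₂ // y ≠ v} :=
  if h : y = v then Sum.inl u else Sum.inr ⟨y, h⟩

lemma ι₂_v : ι₂ (V₁ := V₁) u v v = Sum.inl u := dif_pos rfl

lemma ι₂_ne {y : V₂} (h : y ≠ v) : ι₂ (V₁ := V₁) u v y = Sum.inr ⟨y, h⟩ := dif_neg h

lemma adj_ι₂ {x y : V₂} (h : G₂.Adj x y) :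
    (mergeGraph G₁ G₂ u v).Adj (ι₂ u v x) (ι₂ u v y) := by
  rw [mergeGraph, SimpleGraph.fromRel_adj]
  by_cases hx : x = v
  · have hy : y ≠ v := fun hy => h.ne (hx.trans hy.symm)
    rw [hx, ι₂_v, ι₂_ne hy]
    exact ⟨by simp, Or.inl (Or.inr (Or.inr ⟨⟨y, hy⟩, rfl, rfl, hx ▸ h⟩))⟩
  · by_cases hy : y = v
    · rw [hy, ι₂_v, ι₂_ne hx]
      exact ⟨by simp, Or.inr (Or.inr (Or.inr ⟨⟨x, hx⟩, rfl, rfl, (hy ▸ h).symm⟩))⟩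
    · rw [ι₂_ne hx, ι₂_ne hy]
      refine ⟨?_, Or.inl (Or.inr (Or.inl ⟨⟨x, hx⟩, ⟨y, hy⟩, rfl, rfl, h⟩))⟩
      simp only [ne_eq, Sum.inr.injEq, Subtype.mk.injEq]
      exact h.ne

def hom₂ (G₁ : SimpleGraph V₁) (G₂ : SimpleGraph V₂) (u : V₁) (v : V₂) :
    G₂ →g mergeGraph G₁ G₂ u v :=
  ⟨ι₂ u v, fun h => adj_ι₂ h⟩

/-- combined projection walk lemma -/
lemma walk_proj : ∀ {x y : V₁ ⊕ {y : V₂ // y ≠ v}} (p : (mergeGraph G₁ G₂ u v).Walk x y),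
    ∃ (q₁ : G₁.Walk (Sum.elim id (fun _ => u) x) (Sum.elim id (fun _ => u) y))
      (q₂ : G₂.Walk (Sum.elim (fun _ => v) Subtype.val x) (Sum.elim (fun _ => v) Subtype.val y)),
      q₁.length + q₂.length ≤ p.length := by
  intro x y p
  induction p with
  | nil => exact ⟨.nil, .nil, by simp⟩
  | @cons x z y h p ih =>
    obtain ⟨q₁, q₂, hq⟩ := ih
    rcases adj_cases h with ⟨a, b, hx, hz, hab⟩ | ⟨a, b, hx, hz, hab⟩ |
        ⟨b, hx, hz, hb⟩ | ⟨b, hx, hz, hb⟩ <;> subst hx <;> subst hz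
    · exact ⟨q₁.cons hab, q₂, by show q₁.length + 1 + q₂.length ≤ p.length + 1; omega⟩
    · exact ⟨q₁, q₂.cons hab, by show q₁.length + (q₂.length + 1) ≤ p.length + 1; omega⟩
    · exact ⟨q₁, q₂.cons hb, by show q₁.length + (q₂.length + 1) ≤ p.length + 1; omega⟩
    · exact ⟨q₁, q₂.cons hb.symm, by show q₁.length + (q₂.length + 1) ≤ p.length + 1; omega⟩

variable (hG₁ : G₁.Connected) (hG₂ : G₂.Connected)
include hG₁ hG₂

lemma dist_inl_inl (a b : V₁) :
    (mergeGraph G₁ G₂ u v).dist (Sum.inl a) (Sum.inl b) = G₁.dist a b := by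
  obtain ⟨p, hp⟩ := hG₁.exists_walk_length_eq_dist a b
  refine le_antisymm ?_ ?_
  · calc (mergeGraph G₁ G₂ u v).dist (Sum.inl a) (Sum.inl b)
        ≤ (p.map (hom₁ G₁ G₂ u v)).length := SimpleGraph.dist_le _
      _ = G₁.dist a b := by rw [SimpleGraph.Walk.length_map, hp]
  · have hr : (mergeGraph G₁ G₂ u v).Reachable (Sum.inl a) (Sum.inl b) :=
      ⟨p.map (hom₁ G₁ G₂ u v)⟩
    obtain ⟨q, hq⟩ := hr.exists_walk_length_eq_dist
    obtain ⟨q₁, q₂, hle⟩ := walk_proj q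
    calc G₁.dist a b ≤ q₁.length := SimpleGraph.dist_le _
      _ ≤ q.length := by omega
      _ = _ := hq

lemma dist_inr_inr (x y : {y : V₂ // y ≠ v}) :
    (mergeGraph G₁ G₂ u v).dist (Sum.inr x) (Sum.inr y) = G₂.dist x.1 y.1 := by
  obtain ⟨p, hp⟩ := hG₂.exists_walk_length_eq_dist x.1 y.1
  have hx : (hom₂ G₁ G₂ u v) x.1 = Sum.inr x := ι₂_ne x.2
  have hy : (hom₂ G₁ G₂ u v) y.1 = Sum.inr y := ι₂_ne y.2
  refine le_antisymm ?_ ?_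
  · have := SimpleGraph.dist_le ((p.map (hom₂ G₁ G₂ u v)).copy hx hy)
    rwa [SimpleGraph.Walk.length_copy, SimpleGraph.Walk.length_map, hp] at this
  · have hr : (mergeGraph G₁ G₂ u v).Reachable (Sum.inr x) (Sum.inr y) :=
      ⟨(p.map (hom₂ G₁ G₂ u v)).copy hx hy⟩
    obtain ⟨q, hq⟩ := hr.exists_walk_length_eq_dist
    obtain ⟨q₁, q₂, hle⟩ := walk_proj q
    calc G₂.dist x.1 y.1 ≤ q₂.length := SimpleGraph.dist_le _
      _ ≤ q.length := by omega
      _ = _ := hq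

lemma dist_inl_inr (a : V₁) (y : {y : V₂ // y ≠ v}) :
    (mergeGraph G₁ G₂ u v).dist (Sum.inl a) (Sum.inr y) = G₁.dist a u + G₂.dist v y.1 := by
  obtain ⟨p₁, hp₁⟩ := hG₁.exists_walk_length_eq_dist a u
  obtain ⟨p₂, hp₂⟩ := hG₂.exists_walk_length_eq_dist v y.1
  have hv : (hom₂ G₁ G₂ u v) v = (hom₁ G₁ G₂ u v) u := ι₂_v
  have hy : (hom₂ G₁ G₂ u v) y.1 = Sum.inr y := ι₂_ne y.2
  refine le_antisymm ?_ ?_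
  · have := SimpleGraph.dist_le
      ((p₁.map (hom₁ G₁ G₂ u v)).append ((p₂.map (hom₂ G₁ G₂ u v)).copy hv hy))
    rwa [SimpleGraph.Walk.length_append, SimpleGraph.Walk.length_copy,
      SimpleGraph.Walk.length_map, SimpleGraph.Walk.length_map, hp₁, hp₂] at this
  · have hr : (mergeGraph G₁ G₂ u v).Reachable (Sum.inl a) (Sum.inr y) :=
      ⟨(p₁.map (hom₁ G₁ G₂ u v)).append ((p₂.map (hom₂ G₁ G₂ u v)).copy hv hy)⟩
    obtain ⟨q, hq⟩ := hr.exists_walk_length_eq_dist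
    obtain ⟨q₁, q₂, hle⟩ := walk_proj q
    have h1 : G₁.dist a u ≤ q₁.length := SimpleGraph.dist_le _
    have h2 : G₂.dist v y.1 ≤ q₂.length := SimpleGraph.dist_le _
    omega

lemma dist_inr_inl (y : {y : V₂ // y ≠ v}) (a : V₁) :
    (mergeGraph G₁ G₂ u v).dist (Sum.inr y) (Sum.inl a) = G₁.dist a u + G₂.dist v y.1 := by
  rw [SimpleGraph.dist_comm]; exact dist_inl_inr hG₁ hG₂ a y

end MergeAux

open MergeAux in
/-- If `G₁` and `G₂` are finite connected graphs with nonnegative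
curvatures, then the graph `H` obtained by merging them at a vertex (identifying
`u ∈ V(G₁)` with `v ∈ V(G₂)`) has a curvature which is nonnegative at every vertex
except possibly the merged vertex. -/
theorem stmt_8 {V₁ V₂ : Type*} [Fintype V₁] [Fintype V₂] [DecidableEq V₂]
    (G₁ : SimpleGraph V₁) (G₂ : SimpleGraph V₂)
    (hG₁ : G₁.Connected) (hG₂ : G₂.Connected)
    (D₁ : Matrix V₁ V₁ ℝ) (hD₁ : ∀ a b, D₁ a b = (G₁.dist a b : ℝ))
    (D₂ : Matrix V₂ V₂ ℝ) (hD₂ : ∀ a b, D₂ a b = (G₂.dist a b : ℝ))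
    (w₁ : V₁ → ℝ) (hw₁0 : ∀ i, 0 ≤ w₁ i)
    (hw₁ : D₁.mulVec w₁ = fun _ => (Fintype.card V₁ : ℝ))
    (w₂ : V₂ → ℝ) (hw₂0 : ∀ i, 0 ≤ w₂ i)
    (hw₂ : D₂.mulVec w₂ = fun _ => (Fintype.card V₂ : ℝ))
    (u : V₁) (v : V₂) :
    ∃ w : V₁ ⊕ {y : V₂ // y ≠ v} → ℝ,
      (Matrix.of fun a b => ((mergeGraph G₁ G₂ u v).dist a b : ℝ)).mulVec w
          = (fun _ => ((Fintype.card V₁ : ℝ) + (Fintype.card V₂ : ℝ) - 1)) ∧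
        ∀ x, x ≠ Sum.inl u → 0 ≤ w x := by
  classical
  set n₁ : ℝ := (Fintype.card V₁ : ℝ) with hn₁
  set n₂ : ℝ := (Fintype.card V₂ : ℝ) with hn₂
  -- row identities
  have key₁ : ∀ a : V₁, ∑ b, (G₁.dist a b : ℝ) * w₁ b = n₁ := by
    intro a
    have := congrFun hw₁ a
    simp only [Matrix.mulVec, dotProduct] at this
    simpa only [hD₁] using this
  have key₂ : ∀ a : V₂, ∑ b, (G₂.dist a b : ℝ) * w₂ b = n₂ := by
    intro a
    have := congrFun hw₂ a
    simp only [Matrix.mulVec, dotProduct] at this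
    simpa only [hD₂] using this
  set S₁ : ℝ := ∑ a, w₁ a with hS₁def
  set S₂ : ℝ := ∑ a, w₂ a with hS₂def
  haveI : Nonempty V₁ := hG₁.nonempty
  haveI : Nonempty V₂ := hG₂.nonempty
  have hn₁pos : 0 < n₁ := by
    rw [hn₁]; exact_mod_cast (Fintype.card_pos : 0 < Fintype.card V₁)
  have hn₂pos : 0 < n₂ := by
    rw [hn₂]; exact_mod_cast (Fintype.card_pos : 0 < Fintype.card V₂)
  have hS₁nonneg : 0 ≤ S₁ := Finset.sum_nonneg fun i _ => hw₁0 i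
  have hS₂nonneg : 0 ≤ S₂ := Finset.sum_nonneg fun i _ => hw₂0 i
  have hS₁pos : 0 < S₁ := by
    rcases hS₁nonneg.lt_or_eq with h | h
    · exact h
    · exfalso
      have hz : ∀ i ∈ Finset.univ, w₁ i = 0 :=
        (Finset.sum_eq_zero_iff_of_nonneg fun i _ => hw₁0 i).mp h.symm
      have := key₁ u
      rw [Finset.sum_eq_zero (fun b _ => by rw [hz b (Finset.mem_univ b), mul_zero])] at this
      linarith
  have hS₂pos : 0 < S₂ := by
    rcases hS₂nonneg.lt_or_eq with h | h
    · exact h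
    · exfalso
      have hz : ∀ i ∈ Finset.univ, w₂ i = 0 :=
        (Finset.sum_eq_zero_iff_of_nonneg fun i _ => hw₂0 i).mp h.symm
      have := key₂ v
      rw [Finset.sum_eq_zero (fun b _ => by rw [hz b (Finset.mem_univ b), mul_zero])] at this
      linarith
  set den : ℝ := n₁ * S₂ + n₂ * S₁ with hden
  have hdenpos : 0 < den := by positivity
  have hm : (0:ℝ) ≤ n₁ + n₂ - 1 := by
    have h1 : (1:ℝ) ≤ n₁ := by
      rw [hn₁]; exact_mod_cast (Fintype.card_pos : 0 < Fintype.card V₁)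
    linarith
  set lam₁ : ℝ := (n₁ + n₂ - 1) * S₂ / den with hlam₁
  set lam₂ : ℝ := (n₁ + n₂ - 1) * S₁ / den with hlam₂
  have hlam₁0 : 0 ≤ lam₁ := by positivity
  have hlam₂0 : 0 ≤ lam₂ := by positivity
  have hbal : lam₁ * S₁ = lam₂ * S₂ := by
    rw [hlam₁, hlam₂]; field_simp
  have hsum : lam₁ * n₁ + lam₂ * n₂ = n₁ + n₂ - 1 := by
    rw [hlam₁, hlam₂]
    field_simp
    ring
  set A : ℝ := lam₁ * w₁ u - lam₂ * (S₂ - w₂ v) with hA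
  refine ⟨fun x => Sum.elim (fun a => if a = u then A else lam₁ * w₁ a)
      (fun y => lam₂ * w₂ y.1) x, ?_, ?_⟩
  swap
  · rintro (a | y) hx
    · have ha : a ≠ u := fun h => hx (by rw [h])
      simp only [Sum.elim_inl, if_neg ha]
      exact mul_nonneg hlam₁0 (hw₁0 a)
    · simp only [Sum.elim_inr]
      exact mul_nonneg hlam₂0 (hw₂0 y.1)
  -- the mulVec computation
  have hsub : ∀ g : V₂ → ℝ, ∑ y : {y : V₂ // y ≠ v}, g y.1 = (∑ y, g y) - g v := by
    intro g
    rw [← Finset.sum_subtype (Finset.univ.erase v) (by simp) g,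
      Finset.sum_erase_eq_sub (Finset.mem_univ v)]
  have hsplit : ∀ d : V₁ → ℝ,
      ∑ a, d a * (if a = u then A else lam₁ * w₁ a)
        = lam₁ * (∑ a, d a * w₁ a) + d u * (A - lam₁ * w₁ u) := by
    intro d
    have h1 : ∀ a, d a * (if a = u then A else lam₁ * w₁ a)
        = lam₁ * (d a * w₁ a) + (if a = u then d a * (A - lam₁ * w₁ a) else 0) := by
      intro a; split <;> ring
    rw [Finset.sum_congr rfl fun a _ => h1 a, Finset.sum_add_distrib, ← Finset.mul_sum,
      Finset.sum_ite_eq' Finset.univ u, if_pos (Finset.mem_univ u)]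
  funext x
  simp only [Matrix.mulVec, dotProduct, Matrix.of_apply, Fintype.sum_sum_type,
    Sum.elim_inl, Sum.elim_inr]
  cases x with
  | inl c =>
    simp only [dist_inl_inl hG₁ hG₂, dist_inl_inr hG₁ hG₂, Nat.cast_add]
    rw [hsplit, key₁ c]
    have h2 : ∑ y : {y : V₂ // y ≠ v},
        ((G₁.dist c u : ℝ) + (G₂.dist v y.1 : ℝ)) * (lam₂ * w₂ y.1)
        = (G₁.dist c u : ℝ) * (lam₂ * (S₂ - w₂ v)) + lam₂ * n₂ := by
      rw [show (∑ y : {y : V₂ // y ≠ v},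
          ((G₁.dist c u : ℝ) + (G₂.dist v y.1 : ℝ)) * (lam₂ * w₂ y.1))
          = (∑ y, ((G₁.dist c u : ℝ) + (G₂.dist v y : ℝ)) * (lam₂ * w₂ y))
            - ((G₁.dist c u : ℝ) + (G₂.dist v v : ℝ)) * (lam₂ * w₂ v)
          from hsub (fun y => ((G₁.dist c u : ℝ) + (G₂.dist v y : ℝ)) * (lam₂ * w₂ y))]
      have h3 : ∀ y : V₂, ((G₁.dist c u : ℝ) + (G₂.dist v y : ℝ)) * (lam₂ * w₂ y)
          = (G₁.dist c u : ℝ) * (lam₂ * w₂ y) + lam₂ * ((G₂.dist v y : ℝ) * w₂ y) := by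
        intro y; ring
      rw [Finset.sum_congr rfl fun y _ => h3 y, Finset.sum_add_distrib]
      simp only [← Finset.mul_sum]
      rw [key₂ v, ← hS₂def,
        show (G₂.dist v v : ℝ) = 0 by rw [SimpleGraph.dist_self]; norm_num]
      ring
    rw [h2, hA]
    linear_combination hsum
  | inr z =>
    simp only [dist_inr_inl hG₁ hG₂, dist_inr_inr hG₁ hG₂, Nat.cast_add]
    rw [hsplit]
    have h4 : ∑ a, ((G₁.dist a u : ℝ) + (G₂.dist v z.1 : ℝ)) * w₁ a
        = n₁ + (G₂.dist v z.1 : ℝ) * S₁ := by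
      have h5 : ∀ a, ((G₁.dist a u : ℝ) + (G₂.dist v z.1 : ℝ)) * w₁ a
          = (G₁.dist u a : ℝ) * w₁ a + (G₂.dist v z.1 : ℝ) * w₁ a := by
        intro a; rw [SimpleGraph.dist_comm]; ring
      rw [Finset.sum_congr rfl fun a _ => h5 a, Finset.sum_add_distrib, key₁ u,
        ← Finset.mul_sum, ← hS₁def]
    rw [h4]
    have h6 : ∑ y : {y : V₂ // y ≠ v}, (G₂.dist z.1 y.1 : ℝ) * (lam₂ * w₂ y.1)
        = lam₂ * n₂ - lam₂ * ((G₂.dist v z.1 : ℝ) * w₂ v) := by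
      rw [show (∑ y : {y : V₂ // y ≠ v}, (G₂.dist z.1 y.1 : ℝ) * (lam₂ * w₂ y.1))
          = (∑ y, (G₂.dist z.1 y : ℝ) * (lam₂ * w₂ y))
            - (G₂.dist z.1 v : ℝ) * (lam₂ * w₂ v)
          from hsub (fun y => (G₂.dist z.1 y : ℝ) * (lam₂ * w₂ y))]
      have h7 : ∀ y : V₂, (G₂.dist z.1 y : ℝ) * (lam₂ * w₂ y)
          = lam₂ * ((G₂.dist z.1 y : ℝ) * w₂ y) := fun y => by ring
      rw [Finset.sum_congr rfl fun y _ => h7 y, ← Finset.mul_sum, key₂ z.1,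
        SimpleGraph.dist_comm]
      ring
    rw [h6, show (G₁.dist u u : ℝ) = 0 by rw [SimpleGraph.dist_self]; norm_num, hA]
    linear_combination hsum + (G₂.dist v z.1 : ℝ) * hbal
end

section
/- Let G₁ and G₂ be finite connected simple graphs with n₁ and n₂ vertices and distance matrices D₁, D₂, each admitting a nonnegative curvature (an entrywise nonnegative wᵢ with Dᵢwᵢ = nᵢ·𝟏). Let G be the graph obtained by adding an edge between a vertex of G₁ and a vertex of G₂, with distance matrix D_G. Identifying ℝ^{n₁} and ℝ^{n₂} with the corresponding coordinate subspaces of ℝ^{n₁+n₂} (augmenting by zeros), we have null(D_G) = null(D₁) ⊕ null(D₂); in particular dim null(D_G) = dim null(D₁) + dim null(D₂). -/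
/-- Extension by zero of a vector indexed by `V₁` to a vector indexed by `V₁ ⊕ V₂`,
as a linear map. -/
def extendLeft (V₁ V₂ : Type*) : (V₁ → ℝ) →ₗ[ℝ] (V₁ ⊕ V₂ → ℝ) where
  toFun η := Sum.elim η 0
  map_add' x y := by funext z; cases z <;> simp
  map_smul' c x := by funext z; cases z <;> simp

/-- Extension by zero of a vector indexed by `V₂` to a vector indexed by `V₁ ⊕ V₂`,
as a linear map. -/
def extendRight (V₁ V₂ : Type*) : (V₂ → ℝ) →ₗ[ℝ] (V₁ ⊕ V₂ → ℝ) where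
  toFun ξ := Sum.elim 0 ξ
  map_add' x y := by funext z; cases z <;> simp
  map_smul' c x := by funext z; cases z <;> simp

namespace BridgeAux

variable {V₁ V₂ : Type*} {G₁ : SimpleGraph V₁} {G₂ : SimpleGraph V₂} {u : V₁} {v : V₂}

lemma adj_inl {a b : V₁} (h : G₁.Adj a b) :
    (bridgeGraph G₁ G₂ u v).Adj (Sum.inl a) (Sum.inl b) := by
  rw [bridgeGraph, SimpleGraph.fromRel_adj]
  exact ⟨by simpa using h.ne, Or.inl (Or.inl ⟨a, b, rfl, rfl, h⟩)⟩

lemma adj_inr {a b : V₂} (h : G₂.Adj a b) :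
    (bridgeGraph G₁ G₂ u v).Adj (Sum.inr a) (Sum.inr b) := by
  rw [bridgeGraph, SimpleGraph.fromRel_adj]
  exact ⟨by simpa using h.ne, Or.inl (Or.inr (Or.inl ⟨a, b, rfl, rfl, h⟩))⟩

lemma adj_uv : (bridgeGraph G₁ G₂ u v).Adj (Sum.inl u) (Sum.inr v) := by
  rw [bridgeGraph, SimpleGraph.fromRel_adj]
  exact ⟨by simp, Or.inl (Or.inr (Or.inr ⟨rfl, rfl⟩))⟩

lemma adj_cases {x z : V₁ ⊕ V₂} (h : (bridgeGraph G₁ G₂ u v).Adj x z) :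
    (∃ a b, x = Sum.inl a ∧ z = Sum.inl b ∧ G₁.Adj a b) ∨
    (∃ a b, x = Sum.inr a ∧ z = Sum.inr b ∧ G₂.Adj a b) ∨
    (x = Sum.inl u ∧ z = Sum.inr v) ∨ (x = Sum.inr v ∧ z = Sum.inl u) := by
  rw [bridgeGraph, SimpleGraph.fromRel_adj] at h
  rcases h.2 with (⟨a, b, h1, h2, h3⟩ | ⟨a, b, h1, h2, h3⟩ | ⟨h1, h2⟩) |
    (⟨a, b, h1, h2, h3⟩ | ⟨a, b, h1, h2, h3⟩ | ⟨h1, h2⟩)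
  · exact Or.inl ⟨a, b, h1, h2, h3⟩
  · exact Or.inr (Or.inl ⟨a, b, h1, h2, h3⟩)
  · exact Or.inr (Or.inr (Or.inl ⟨h1, h2⟩))
  · exact Or.inl ⟨b, a, h2, h1, h3.symm⟩
  · exact Or.inr (Or.inl ⟨b, a, h2, h1, h3.symm⟩)
  · exact Or.inr (Or.inr (Or.inr ⟨h2, h1⟩))

/-- candidate distance -/
noncomputable def bdist (G₁ : SimpleGraph V₁) (G₂ : SimpleGraph V₂) (u : V₁) (v : V₂) :
    V₁ ⊕ V₂ → V₁ ⊕ V₂ → ℕ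
  | Sum.inl a, Sum.inl b => G₁.dist a b
  | Sum.inl a, Sum.inr b => G₁.dist a u + 1 + G₂.dist v b
  | Sum.inr a, Sum.inl b => G₂.dist a v + 1 + G₁.dist u b
  | Sum.inr a, Sum.inr b => G₂.dist a b

def homInl : G₁ →g bridgeGraph G₁ G₂ u v where
  toFun := Sum.inl
  map_rel' h := adj_inl h

def homInr : G₂ →g bridgeGraph G₁ G₂ u v where
  toFun := Sum.inr
  map_rel' h := adj_inr h

lemma exists_walk (hG₁ : G₁.Connected) (hG₂ : G₂.Connected) (x y : V₁ ⊕ V₂) :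
    ∃ p : (bridgeGraph G₁ G₂ u v).Walk x y, p.length = bdist G₁ G₂ u v x y := by
  cases x with
  | inl a =>
    cases y with
    | inl b =>
      obtain ⟨p, hp⟩ := (hG₁ a b).exists_walk_length_eq_dist
      exact ⟨p.map homInl, (SimpleGraph.Walk.length_map (f := homInl) (p := p)).trans hp⟩
    | inr b =>
      obtain ⟨p, hp⟩ := (hG₁ a u).exists_walk_length_eq_dist
      obtain ⟨q, hq⟩ := (hG₂ v b).exists_walk_length_eq_dist
      refine ⟨(p.map homInl).append (SimpleGraph.Walk.cons adj_uv (q.map homInr)), ?_⟩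
      have e1 := SimpleGraph.Walk.length_map (f := (homInl (G₁ := G₁) (G₂ := G₂) (u := u) (v := v))) (p := p)
      have e2 := SimpleGraph.Walk.length_map (f := (homInr (G₁ := G₁) (G₂ := G₂) (u := u) (v := v))) (p := q)
      erw [SimpleGraph.Walk.length_append, SimpleGraph.Walk.length_cons]
      simp only [bdist]
      erw [e1, e2]
      omega
  | inr a =>
    cases y with
    | inl b =>
      obtain ⟨p, hp⟩ := (hG₂ a v).exists_walk_length_eq_dist
      obtain ⟨q, hq⟩ := (hG₁ u b).exists_walk_length_eq_dist
      refine ⟨(p.map homInr).append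
        (SimpleGraph.Walk.cons adj_uv.symm (q.map homInl)), ?_⟩
      have e1 := SimpleGraph.Walk.length_map (f := (homInr (G₁ := G₁) (G₂ := G₂) (u := u) (v := v))) (p := p)
      have e2 := SimpleGraph.Walk.length_map (f := (homInl (G₁ := G₁) (G₂ := G₂) (u := u) (v := v))) (p := q)
      erw [SimpleGraph.Walk.length_append, SimpleGraph.Walk.length_cons]
      simp only [bdist]
      erw [e1, e2]
      omega
    | inr b =>
      obtain ⟨p, hp⟩ := (hG₂ a b).exists_walk_length_eq_dist
      exact ⟨p.map homInr, (SimpleGraph.Walk.length_map (f := homInr) (p := p)).trans hp⟩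

lemma dist_adj_le {V : Type*} {G : SimpleGraph V} (hG : G.Connected) {a b c : V}
    (h : G.Adj a b) : G.dist a c ≤ G.dist b c + 1 := by
  have := hG.dist_triangle (u := a) (v := b) (w := c)
  have h1 : G.dist a b = 1 := SimpleGraph.dist_eq_one_iff_adj.mpr h
  omega

lemma bdist_step (hG₁ : G₁.Connected) (hG₂ : G₂.Connected) {x z : V₁ ⊕ V₂}
    (h : (bridgeGraph G₁ G₂ u v).Adj x z) (y : V₁ ⊕ V₂) :
    bdist G₁ G₂ u v x y ≤ bdist G₁ G₂ u v z y + 1 := by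
  rcases adj_cases h with ⟨a, b, rfl, rfl, hab⟩ | ⟨a, b, rfl, rfl, hab⟩ |
      ⟨rfl, rfl⟩ | ⟨rfl, rfl⟩ <;> cases y <;>
    simp only [bdist, SimpleGraph.dist_self]
  · exact dist_adj_le hG₁ hab
  · have := dist_adj_le hG₁ hab (c := u); omega
  · have := dist_adj_le hG₂ hab (c := v); omega
  · exact dist_adj_le hG₂ hab
  · omega
  · omega
  · omega
  · omega

lemma bdist_le_length (hG₁ : G₁.Connected) (hG₂ : G₂.Connected) :
    ∀ {x y : V₁ ⊕ V₂} (p : (bridgeGraph G₁ G₂ u v).Walk x y),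
      bdist G₁ G₂ u v x y ≤ p.length
  | x, _, SimpleGraph.Walk.nil => by cases x <;> simp [bdist]
  | x, y, SimpleGraph.Walk.cons h q => by
    have h1 := bdist_step hG₁ hG₂ h y
    have h2 := bdist_le_length hG₁ hG₂ q
    simp only [SimpleGraph.Walk.length_cons]
    omega

lemma bridge_dist_eq (hG₁ : G₁.Connected) (hG₂ : G₂.Connected) (x y : V₁ ⊕ V₂) :
    (bridgeGraph G₁ G₂ u v).dist x y = bdist G₁ G₂ u v x y := by
  obtain ⟨p, hp⟩ := exists_walk hG₁ hG₂ x y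
  refine le_antisymm (hp ▸ SimpleGraph.dist_le p) ?_
  obtain ⟨q, hq⟩ := SimpleGraph.Reachable.exists_walk_length_eq_dist ⟨p⟩
  exact hq ▸ bdist_le_length hG₁ hG₂ q

end BridgeAux

/-- If `G₁` and `G₂` are finite connected graphs admitting nonnegative
curvatures and `G` is obtained by adding an edge between them, then
`null(D_G) = null(D₁) ⊕ null(D₂)` (null spaces embedded by augmenting zeros); in
particular the dimensions add up. -/
theorem stmt_14 {V₁ V₂ : Type*} [Fintype V₁] [Fintype V₂]
    (G₁ : SimpleGraph V₁) (G₂ : SimpleGraph V₂)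
    (hG₁ : G₁.Connected) (hG₂ : G₂.Connected)
    (D₁ : Matrix V₁ V₁ ℝ) (hD₁ : ∀ a b, D₁ a b = (G₁.dist a b : ℝ))
    (D₂ : Matrix V₂ V₂ ℝ) (hD₂ : ∀ a b, D₂ a b = (G₂.dist a b : ℝ))
    (w₁ : V₁ → ℝ) (hw₁0 : ∀ i, 0 ≤ w₁ i)
    (hw₁ : D₁.mulVec w₁ = fun _ => (Fintype.card V₁ : ℝ))
    (w₂ : V₂ → ℝ) (hw₂0 : ∀ i, 0 ≤ w₂ i)
    (hw₂ : D₂.mulVec w₂ = fun _ => (Fintype.card V₂ : ℝ))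
    (u : V₁) (v : V₂)
    (DG : Matrix (V₁ ⊕ V₂) (V₁ ⊕ V₂) ℝ)
    (hDG : ∀ a b, DG a b = ((bridgeGraph G₁ G₂ u v).dist a b : ℝ)) :
    LinearMap.ker DG.mulVecLin
        = (LinearMap.ker D₁.mulVecLin).map (extendLeft V₁ V₂)
          ⊔ (LinearMap.ker D₂.mulVecLin).map (extendRight V₁ V₂) ∧
      Disjoint ((LinearMap.ker D₁.mulVecLin).map (extendLeft V₁ V₂))
        ((LinearMap.ker D₂.mulVecLin).map (extendRight V₁ V₂)) ∧
      Module.finrank ℝ (LinearMap.ker DG.mulVecLin)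
        = Module.finrank ℝ (LinearMap.ker D₁.mulVecLin)
          + Module.finrank ℝ (LinearMap.ker D₂.mulVecLin) := by
  classical
  haveI : Nonempty V₁ := hG₁.nonempty
  haveI : Nonempty V₂ := hG₂.nonempty
  set n₁ : ℝ := (Fintype.card V₁ : ℝ) with hn₁
  set n₂ : ℝ := (Fintype.card V₂ : ℝ) with hn₂
  have n₁pos : 0 < n₁ := by rw [hn₁]; exact_mod_cast Fintype.card_pos
  have n₂pos : 0 < n₂ := by rw [hn₂]; exact_mod_cast Fintype.card_pos
  have hd := BridgeAux.bridge_dist_eq (u := u) (v := v) hG₁ hG₂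
  have hsymm1 : ∀ a b, D₁ a b = D₁ b a := fun a b => by
    rw [hD₁, hD₁, SimpleGraph.dist_comm]
  have hsymm2 : ∀ a b, D₂ a b = D₂ b a := fun a b => by
    rw [hD₂, hD₂, SimpleGraph.dist_comm]
  have hD₁uu : D₁ u u = 0 := by rw [hD₁]; simp
  have hD₂vv : D₂ v v = 0 := by rw [hD₂]; simp
  -- entries of DG
  have e11 : ∀ a b, DG (Sum.inl a) (Sum.inl b) = D₁ a b := fun a b => by
    rw [hDG, hd, hD₁]; simp [BridgeAux.bdist]
  have e22 : ∀ a b, DG (Sum.inr a) (Sum.inr b) = D₂ a b := fun a b => by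
    rw [hDG, hd, hD₂]; simp [BridgeAux.bdist]
  have e12 : ∀ a b, DG (Sum.inl a) (Sum.inr b) = D₁ a u + 1 + D₂ v b := fun a b => by
    rw [hDG, hd, hD₁, hD₂]; simp [BridgeAux.bdist]
  have e21 : ∀ b a, DG (Sum.inr b) (Sum.inl a) = D₂ v b + 1 + D₁ u a := fun b a => by
    rw [hDG, hd, hD₁, hD₂, SimpleGraph.dist_comm]
    simp [BridgeAux.bdist]
  -- mulVec formulas
  have keyL : ∀ (x : V₁ ⊕ V₂ → ℝ) (a : V₁),
      DG.mulVec x (Sum.inl a)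
        = D₁.mulVec (x ∘ Sum.inl) a + (D₁ a u + 1) * (∑ b, x (Sum.inr b))
          + ∑ b, D₂ v b * x (Sum.inr b) := by
    intro x a
    have hsplit : DG.mulVec x (Sum.inl a)
        = (∑ b, DG (Sum.inl a) (Sum.inl b) * x (Sum.inl b))
          + ∑ b, DG (Sum.inl a) (Sum.inr b) * x (Sum.inr b) := by
      simp [Matrix.mulVec, dotProduct, Fintype.sum_sum_type]
    rw [hsplit]
    have h1 : ∑ b, DG (Sum.inl a) (Sum.inl b) * x (Sum.inl b)
        = D₁.mulVec (x ∘ Sum.inl) a := by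
      simp [Matrix.mulVec, dotProduct, e11, Function.comp]
    have h2 : ∑ b, DG (Sum.inl a) (Sum.inr b) * x (Sum.inr b)
        = (D₁ a u + 1) * (∑ b, x (Sum.inr b)) + ∑ b, D₂ v b * x (Sum.inr b) := by
      rw [Finset.mul_sum, ← Finset.sum_add_distrib]
      exact Finset.sum_congr rfl fun b _ => by rw [e12]; ring
    rw [h1, h2]; ring
  have keyR : ∀ (x : V₁ ⊕ V₂ → ℝ) (b : V₂),
      DG.mulVec x (Sum.inr b)
        = D₂.mulVec (x ∘ Sum.inr) b + (D₂ v b + 1) * (∑ a, x (Sum.inl a))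
          + ∑ a, D₁ u a * x (Sum.inl a) := by
    intro x b
    have hsplit : DG.mulVec x (Sum.inr b)
        = (∑ a, DG (Sum.inr b) (Sum.inl a) * x (Sum.inl a))
          + ∑ a, DG (Sum.inr b) (Sum.inr a) * x (Sum.inr a) := by
      simp [Matrix.mulVec, dotProduct, Fintype.sum_sum_type]
    rw [hsplit]
    have h1 : ∑ a, DG (Sum.inr b) (Sum.inr a) * x (Sum.inr a)
        = D₂.mulVec (x ∘ Sum.inr) b := by
      simp [Matrix.mulVec, dotProduct, e22, Function.comp]
    have h2 : ∑ a, DG (Sum.inr b) (Sum.inl a) * x (Sum.inl a)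
        = (D₂ v b + 1) * (∑ a, x (Sum.inl a)) + ∑ a, D₁ u a * x (Sum.inl a) := by
      rw [Finset.mul_sum, ← Finset.sum_add_distrib]
      exact Finset.sum_congr rfl fun a _ => by rw [e21]; ring
    rw [h1, h2]; ring
  -- weighted row sums
  have hWD1 : ∀ y : V₁ → ℝ, ∑ a, w₁ a * D₁.mulVec y a = n₁ * ∑ b, y b := by
    intro y
    have step : ∀ a, w₁ a * D₁.mulVec y a = ∑ b, w₁ a * D₁ a b * y b := fun a => by
      simp [Matrix.mulVec, dotProduct, Finset.mul_sum, mul_assoc]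
    rw [Finset.sum_congr rfl fun a _ => step a, Finset.sum_comm, Finset.mul_sum]
    refine Finset.sum_congr rfl fun b _ => ?_
    have : ∑ a, w₁ a * D₁ a b * y b = (∑ a, D₁ b a * w₁ a) * y b := by
      rw [Finset.sum_mul]
      exact Finset.sum_congr rfl fun a _ => by rw [hsymm1 a b]; ring
    rw [this]
    have hb : ∑ a, D₁ b a * w₁ a = n₁ := by
      have := congrFun hw₁ b
      simpa [Matrix.mulVec, dotProduct] using this
    rw [hb]
  have hWD2 : ∀ y : V₂ → ℝ, ∑ a, w₂ a * D₂.mulVec y a = n₂ * ∑ b, y b := by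
    intro y
    have step : ∀ a, w₂ a * D₂.mulVec y a = ∑ b, w₂ a * D₂ a b * y b := fun a => by
      simp [Matrix.mulVec, dotProduct, Finset.mul_sum, mul_assoc]
    rw [Finset.sum_congr rfl fun a _ => step a, Finset.sum_comm, Finset.mul_sum]
    refine Finset.sum_congr rfl fun b _ => ?_
    have : ∑ a, w₂ a * D₂ a b * y b = (∑ a, D₂ b a * w₂ a) * y b := by
      rw [Finset.sum_mul]
      exact Finset.sum_congr rfl fun a _ => by rw [hsymm2 a b]; ring
    rw [this]
    have hb : ∑ a, D₂ b a * w₂ a = n₂ := by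
      have := congrFun hw₂ b
      simpa [Matrix.mulVec, dotProduct] using this
    rw [hb]
  have hsum1 : ∀ y : V₁ → ℝ, D₁.mulVec y = 0 → ∑ b, y b = 0 := by
    intro y hy
    have := hWD1 y
    rw [hy] at this
    simp only [Pi.zero_apply, mul_zero, Finset.sum_const_zero] at this
    rcases mul_eq_zero.mp this.symm with h | h
    · exact absurd h (ne_of_gt n₁pos)
    · exact h
  have hsum2 : ∀ y : V₂ → ℝ, D₂.mulVec y = 0 → ∑ b, y b = 0 := by
    intro y hy
    have := hWD2 y
    rw [hy] at this
    simp only [Pi.zero_apply, mul_zero, Finset.sum_const_zero] at this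
    rcases mul_eq_zero.mp this.symm with h | h
    · exact absurd h (ne_of_gt n₂pos)
    · exact h
  have hWrow1 : ∑ a, w₁ a * D₁ a u = n₁ := by
    have := congrFun hw₁ u
    simp only [Matrix.mulVec, dotProduct] at this
    rw [← this]
    exact Finset.sum_congr rfl fun a _ => by rw [hsymm1 a u]; ring
  have hWrow2 : ∑ b, w₂ b * D₂ v b = n₂ := by
    have := congrFun hw₂ v
    simp only [Matrix.mulVec, dotProduct] at this
    rw [← this]
    exact Finset.sum_congr rfl fun b _ => by ring
  have hW1pos : 0 < ∑ a, w₁ a := by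
    rcases lt_or_eq_of_le (Finset.sum_nonneg fun i _ => hw₁0 i) with h | h
    · exact h
    · exfalso
      have hz := (Finset.sum_eq_zero_iff_of_nonneg fun i _ => hw₁0 i).mp h.symm
      have : (0 : ℝ) = n₁ := by
        have hu := congrFun hw₁ u
        simp only [Matrix.mulVec, dotProduct] at hu
        rw [← hu]
        exact (Finset.sum_eq_zero fun i _ => by
          rw [hz i (Finset.mem_univ i)]; ring).symm
      linarith
  have hW2pos : 0 < ∑ b, w₂ b := by
    rcases lt_or_eq_of_le (Finset.sum_nonneg fun i _ => hw₂0 i) with h | h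
    · exact h
    · exfalso
      have hz := (Finset.sum_eq_zero_iff_of_nonneg fun i _ => hw₂0 i).mp h.symm
      have : (0 : ℝ) = n₂ := by
        have hu := congrFun hw₂ v
        simp only [Matrix.mulVec, dotProduct] at hu
        rw [← hu]
        exact (Finset.sum_eq_zero fun i _ => by
          rw [hz i (Finset.mem_univ i)]; ring).symm
      linarith
  set W₁ : ℝ := ∑ a, w₁ a with hW₁
  set W₂ : ℝ := ∑ b, w₂ b with hW₂
  -- kernel characterization
  have hker : ∀ x : V₁ ⊕ V₂ → ℝ, x ∈ LinearMap.ker DG.mulVecLin ↔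
      D₁.mulVec (x ∘ Sum.inl) = 0 ∧ D₂.mulVec (x ∘ Sum.inr) = 0 := by
    intro x
    rw [LinearMap.mem_ker, Matrix.mulVecLin_apply]
    constructor
    · intro hx
      have hx' : ∀ j, DG.mulVec x j = 0 := fun j => congrFun hx j
      set S₁ : ℝ := ∑ a, x (Sum.inl a) with hS₁
      set S₂ : ℝ := ∑ b, x (Sum.inr b) with hS₂
      set T₁ : ℝ := ∑ a, D₁ u a * x (Sum.inl a) with hT₁
      set T₂ : ℝ := ∑ b, D₂ v b * x (Sum.inr b) with hT₂
      have hA : ∀ a, D₁.mulVec (x ∘ Sum.inl) a + (D₁ a u + 1) * S₂ + T₂ = 0 := fun a => by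
        have := hx' (Sum.inl a); rw [keyL] at this; exact this
      have hB : ∀ b, D₂.mulVec (x ∘ Sum.inr) b + (D₂ v b + 1) * S₁ + T₁ = 0 := fun b => by
        have := hx' (Sum.inr b); rw [keyR] at this; exact this
      have hmT₁ : D₁.mulVec (x ∘ Sum.inl) u = T₁ := by
        simp [Matrix.mulVec, dotProduct, hT₁, Function.comp]
      have hmT₂ : D₂.mulVec (x ∘ Sum.inr) v = T₂ := by
        simp [Matrix.mulVec, dotProduct, hT₂, Function.comp]
      have e1 : T₁ + S₂ + T₂ = 0 := by
        have := hA u; rw [hmT₁, hD₁uu] at this; linarith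
      have e2 : T₂ + S₁ + T₁ = 0 := by
        have := hB v; rw [hmT₂, hD₂vv] at this; linarith
      have eS : S₁ = S₂ := by linarith
      -- weighted equations
      have e3 : n₁ * S₁ + (n₁ + W₁) * S₂ + W₁ * T₂ = 0 := by
        have hzero : ∑ a, w₁ a * (D₁.mulVec (x ∘ Sum.inl) a + (D₁ a u + 1) * S₂ + T₂)
            = 0 := Finset.sum_eq_zero fun a _ => by rw [hA a]; ring
        have hexp : ∑ a, w₁ a * (D₁.mulVec (x ∘ Sum.inl) a + (D₁ a u + 1) * S₂ + T₂)
            = (∑ a, w₁ a * D₁.mulVec (x ∘ Sum.inl) a)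
              + (∑ a, w₁ a * D₁ a u) * S₂ + W₁ * S₂ + W₁ * T₂ := by
          rw [hW₁, Finset.sum_mul, Finset.sum_mul, Finset.sum_mul,
            ← Finset.sum_add_distrib, ← Finset.sum_add_distrib, ← Finset.sum_add_distrib]
          exact Finset.sum_congr rfl fun a _ => by ring
        rw [hexp, hWD1, hWrow1] at hzero
        simp only [Function.comp_apply] at hzero
        rw [← hS₁] at hzero
        linarith
      have e4 : n₂ * S₂ + (n₂ + W₂) * S₁ + W₂ * T₁ = 0 := by
        have hzero : ∑ b, w₂ b * (D₂.mulVec (x ∘ Sum.inr) b + (D₂ v b + 1) * S₁ + T₁)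
            = 0 := Finset.sum_eq_zero fun b _ => by rw [hB b]; ring
        have hexp : ∑ b, w₂ b * (D₂.mulVec (x ∘ Sum.inr) b + (D₂ v b + 1) * S₁ + T₁)
            = (∑ b, w₂ b * D₂.mulVec (x ∘ Sum.inr) b)
              + (∑ b, w₂ b * D₂ v b) * S₁ + W₂ * S₁ + W₂ * T₁ := by
          rw [hW₂, Finset.sum_mul, Finset.sum_mul, Finset.sum_mul,
            ← Finset.sum_add_distrib, ← Finset.sum_add_distrib, ← Finset.sum_add_distrib]
          exact Finset.sum_congr rfl fun b _ => by ring
        rw [hexp, hWD2, hWrow2] at hzero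
        simp only [Function.comp_apply] at hzero
        rw [← hS₂] at hzero
        linarith
      have h5 : 2 * n₁ * S₁ = W₁ * T₁ := by linear_combination e3 - W₁ * e1 + n₁ * eS
      have h6 : 2 * n₂ * S₁ = W₂ * T₂ := by linear_combination e4 - W₂ * e2 + n₂ * eS
      have hTT : T₁ + T₂ = -S₁ := by linarith
      have hfinal : S₁ * (2 * n₁ * W₂ + 2 * n₂ * W₁ + W₁ * W₂) = 0 := by
        linear_combination W₂ * h5 + W₁ * h6 + W₁ * W₂ * hTT
      have hCpos : 0 < 2 * n₁ * W₂ + 2 * n₂ * W₁ + W₁ * W₂ := by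
        have := mul_pos n₁pos hW2pos
        have := mul_pos n₂pos hW1pos
        have := mul_pos hW1pos hW2pos
        linarith
      have hS1z : S₁ = 0 := by
        rcases mul_eq_zero.mp hfinal with h | h
        · exact h
        · linarith
      have hT1z : T₁ = 0 := by
        have := h5; rw [hS1z] at this
        rcases mul_eq_zero.mp (by linarith : W₁ * T₁ = 0) with h | h
        · exact absurd h (ne_of_gt hW1pos)
        · exact h
      have hT2z : T₂ = 0 := by
        have := h6; rw [hS1z] at this
        rcases mul_eq_zero.mp (by linarith : W₂ * T₂ = 0) with h | h
        · exact absurd h (ne_of_gt hW2pos)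
        · exact h
      have hS2z : S₂ = 0 := eS ▸ hS1z
      constructor
      · funext a
        have := hA a
        rw [hS2z, hT2z] at this
        simpa using this
      · funext b
        have := hB b
        rw [hS1z, hT1z] at this
        simpa using this
    · rintro ⟨h1, h2⟩
      funext j
      have hS1 : ∑ a, x (Sum.inl a) = 0 := hsum1 _ h1
      have hS2 : ∑ b, x (Sum.inr b) = 0 := hsum2 _ h2
      have hT1 : ∑ a, D₁ u a * x (Sum.inl a) = 0 := by
        have : D₁.mulVec (x ∘ Sum.inl) u = 0 := by rw [h1]; rfl
        simpa [Matrix.mulVec, dotProduct, Function.comp] using this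
      have hT2 : ∑ b, D₂ v b * x (Sum.inr b) = 0 := by
        have : D₂.mulVec (x ∘ Sum.inr) v = 0 := by rw [h2]; rfl
        simpa [Matrix.mulVec, dotProduct, Function.comp] using this
      cases j with
      | inl a =>
        rw [keyL, hS2, hT2, h1]
        simp
      | inr b =>
        rw [keyR, hS1, hT1, h2]
        simp
  -- extendLeft/Right basic facts
  have hLl : ∀ (η : V₁ → ℝ) (a : V₁), extendLeft V₁ V₂ η (Sum.inl a) = η a := fun _ _ => rfl
  have hLr : ∀ (η : V₁ → ℝ) (b : V₂), extendLeft V₁ V₂ η (Sum.inr b) = 0 := fun _ _ => rfl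
  have hRl : ∀ (ξ : V₂ → ℝ) (a : V₁), extendRight V₁ V₂ ξ (Sum.inl a) = 0 := fun _ _ => rfl
  have hRr : ∀ (ξ : V₂ → ℝ) (b : V₂), extendRight V₁ V₂ ξ (Sum.inr b) = ξ b := fun _ _ => rfl
  have hsup : LinearMap.ker DG.mulVecLin
      = (LinearMap.ker D₁.mulVecLin).map (extendLeft V₁ V₂)
        ⊔ (LinearMap.ker D₂.mulVecLin).map (extendRight V₁ V₂) := by
    ext x
    constructor
    · intro hx
      obtain ⟨h1, h2⟩ := (hker x).1 hx
      refine Submodule.mem_sup.mpr ⟨extendLeft V₁ V₂ (x ∘ Sum.inl),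
        Submodule.mem_map_of_mem (LinearMap.mem_ker.mpr
          (by rw [Matrix.mulVecLin_apply]; exact h1)),
        extendRight V₁ V₂ (x ∘ Sum.inr),
        Submodule.mem_map_of_mem (LinearMap.mem_ker.mpr
          (by rw [Matrix.mulVecLin_apply]; exact h2)), ?_⟩
      funext z
      cases z with
      | inl a => simp [hLl, hLr, hRl, hRr]
      | inr b => simp [hLl, hLr, hRl, hRr]
    · intro hx
      obtain ⟨y, hy, z, hz, rfl⟩ := Submodule.mem_sup.mp hx
      obtain ⟨η, hη, rfl⟩ := hy
      obtain ⟨ξ, hξ, rfl⟩ := hz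
      have hη' : D₁.mulVec η = 0 := hη
      have hξ' : D₂.mulVec ξ = 0 := hξ
      refine (hker _).2 ⟨?_, ?_⟩
      · have hc : ((extendLeft V₁ V₂ η + extendRight V₁ V₂ ξ) ∘ Sum.inl) = η := by
          funext a; simp [hLl, hLr, hRl, hRr]
        rw [hc]; exact hη'
      · have hc : ((extendLeft V₁ V₂ η + extendRight V₁ V₂ ξ) ∘ Sum.inr) = ξ := by
          funext b; simp [hLl, hLr, hRl, hRr]
        rw [hc]; exact hξ'
  have hdisj : Disjoint ((LinearMap.ker D₁.mulVecLin).map (extendLeft V₁ V₂))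
      ((LinearMap.ker D₂.mulVecLin).map (extendRight V₁ V₂)) := by
    rw [Submodule.disjoint_def]
    intro x hx1 hx2
    obtain ⟨η, _, rfl⟩ := hx1
    obtain ⟨ξ, _, h⟩ := hx2
    funext z
    cases z with
    | inl a =>
      have := congrFun h (Sum.inl a)
      simpa [hLl, hLr, hRl, hRr] using this.symm
    | inr b => simp [hLl, hLr, hRl, hRr]
  refine ⟨hsup, hdisj, ?_⟩
  have injL : Function.Injective (extendLeft V₁ V₂) := by
    intro a b hab
    funext i
    have := congrFun hab (Sum.inl i)
    simpa [hLl, hLr, hRl, hRr] using this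
  have injR : Function.Injective (extendRight V₁ V₂) := by
    intro a b hab
    funext i
    have := congrFun hab (Sum.inr i)
    simpa [hLl, hLr, hRl, hRr] using this
  have hfr := Submodule.finrank_sup_add_finrank_inf_eq
    ((LinearMap.ker D₁.mulVecLin).map (extendLeft V₁ V₂))
    ((LinearMap.ker D₂.mulVecLin).map (extendRight V₁ V₂))
  rw [disjoint_iff.mp hdisj, finrank_bot] at hfr
  have hfL : Module.finrank ℝ (LinearMap.ker D₁.mulVecLin)
      = Module.finrank ℝ ((LinearMap.ker D₁.mulVecLin).map (extendLeft V₁ V₂)) :=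
    (Submodule.equivMapOfInjective _ injL _).finrank_eq
  have hfR : Module.finrank ℝ (LinearMap.ker D₂.mulVecLin)
      = Module.finrank ℝ ((LinearMap.ker D₂.mulVecLin).map (extendRight V₁ V₂)) :=
    (Submodule.equivMapOfInjective _ injR _).finrank_eq
  rw [hsup]
  omega
end

section
/- Let G₁ and G₂ be finite connected simple graphs with distance matrices D₁ and D₂ such that neither of the linear systems D₁x = 𝟏 and D₂x = 𝟏 has a solution. Let H be the graph obtained by adding an edge between a vertex u of G₁ and a vertex v of G₂ and then contracting this edge (identifying u and v), and let D_H be the distance matrix of H. Then the linear system D_H x = 𝟏 has no solution. -/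
open SimpleGraph Sum

section Aux

variable {V₁ V₂ : Type*} {G₁ : SimpleGraph V₁} {G₂ : SimpleGraph V₂} {u : V₁} {v : V₂}

/-- Mapping walks along a map that sends edges to edges or collapses them. -/
lemma exists_walk_map {V W : Type*} {G : SimpleGraph V} {G' : SimpleGraph W} (f : V → W)
    (hf : ∀ ⦃x y⦄, G.Adj x y → G'.Adj (f x) (f y) ∨ f x = f y) :
    ∀ {x y : V} (p : G.Walk x y), ∃ q : G'.Walk (f x) (f y), q.length ≤ p.length := by
  intro x y p
  induction p with
  | nil => exact ⟨.nil, le_refl 0⟩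
  | cons h p ih =>
    obtain ⟨q, hq⟩ := ih
    rcases hf h with h' | h'
    · exact ⟨q.cons h', by simpa [SimpleGraph.Walk.length_cons] using Nat.succ_le_succ hq⟩
    · refine ⟨q.copy h'.symm rfl, ?_⟩
      rw [SimpleGraph.Walk.length_copy]
      simp only [SimpleGraph.Walk.length_cons]
      omega

lemma merge_adj_inl_inl {a b : V₁} (h : G₁.Adj a b) :
    (mergeGraph G₁ G₂ u v).Adj (inl a) (inl b) := by
  rw [mergeGraph, SimpleGraph.fromRel_adj]
  exact ⟨by simp [h.ne], Or.inl (Or.inl ⟨a, b, rfl, rfl, h⟩)⟩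

lemma merge_adj_char {x y : V₁ ⊕ {y : V₂ // y ≠ v}} (h : (mergeGraph G₁ G₂ u v).Adj x y) :
    (∃ a b, x = inl a ∧ y = inl b ∧ G₁.Adj a b) ∨
    (∃ a b, x = inr a ∧ y = inr b ∧ G₂.Adj a.1 b.1) ∨
    (x = inl u ∧ ∃ b, y = inr b ∧ G₂.Adj v b.1) ∨
    (y = inl u ∧ ∃ b, x = inr b ∧ G₂.Adj v b.1) := by
  rw [mergeGraph, SimpleGraph.fromRel_adj] at h
  rcases h.2 with (⟨a,b,hx,hy,hab⟩|⟨a,b,hx,hy,hab⟩|⟨b,hx,hy,hab⟩)|(⟨a,b,hy,hx,hab⟩|⟨a,b,hy,hx,hab⟩|⟨b,hy,hx,hab⟩)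
  · exact Or.inl ⟨a, b, hx, hy, hab⟩
  · exact Or.inr (Or.inl ⟨a, b, hx, hy, hab⟩)
  · exact Or.inr (Or.inr (Or.inl ⟨hx, b, hy, hab⟩))
  · exact Or.inl ⟨b, a, hx, hy, hab.symm⟩
  · exact Or.inr (Or.inl ⟨b, a, hx, hy, hab.symm⟩)
  · exact Or.inr (Or.inr (Or.inr ⟨hy, b, hx, hab⟩))

/-- The embedding of `V₂` into the merged graph. -/
def iota2 (G₁ : SimpleGraph V₁) (u : V₁) (v : V₂) [DecidableEq V₂] (b : V₂) :
    V₁ ⊕ {y : V₂ // y ≠ v} :=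
  if h : b = v then inl u else inr ⟨b, h⟩

variable [DecidableEq V₂]

lemma merge_adj_iota2 {a b : V₂} (h : G₂.Adj a b) :
    (mergeGraph G₁ G₂ u v).Adj (iota2 G₁ u v a) (iota2 G₁ u v b) := by
  rw [mergeGraph, SimpleGraph.fromRel_adj]
  unfold iota2
  by_cases ha : a = v <;> by_cases hb : b = v
  · exact absurd (ha ▸ hb ▸ h) (G₂.irrefl)
  · subst ha
    simp only [dif_pos rfl, dif_neg hb]
    exact ⟨by simp, Or.inl (Or.inr (Or.inr ⟨⟨b, hb⟩, rfl, rfl, h⟩))⟩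
  · subst hb
    simp only [dif_pos rfl, dif_neg ha]
    exact ⟨by simp, Or.inr (Or.inr (Or.inr ⟨⟨a, ha⟩, rfl, rfl, h.symm⟩))⟩
  · simp only [dif_neg ha, dif_neg hb]
    exact ⟨by simp [Subtype.ext_iff, h.ne], Or.inl (Or.inr (Or.inl ⟨⟨a, ha⟩, ⟨b, hb⟩, rfl, rfl, h⟩))⟩

lemma pi1_pseudo :
    ∀ ⦃x y : V₁ ⊕ {y : V₂ // y ≠ v}⦄, (mergeGraph G₁ G₂ u v).Adj x y →
      G₁.Adj (Sum.elim id (fun _ => u) x) (Sum.elim id (fun _ => u) y) ∨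
      Sum.elim id (fun _ => u) x = Sum.elim id (fun _ => u) y := by
  intro x y h
  rcases merge_adj_char h with ⟨a,b,hx,hy,hab⟩|⟨a,b,hx,hy,hab⟩|⟨hx,b,hy,hab⟩|⟨hy,b,hx,hab⟩
  all_goals subst hx; subst hy; simp [hab]

lemma pi2_pseudo :
    ∀ ⦃x y : V₁ ⊕ {y : V₂ // y ≠ v}⦄, (mergeGraph G₁ G₂ u v).Adj x y →
      G₂.Adj (Sum.elim (fun _ => v) Subtype.val x) (Sum.elim (fun _ => v) Subtype.val y) ∨
      Sum.elim (fun _ => v) Subtype.val x = Sum.elim (fun _ => v) Subtype.val y := by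
  intro x y h
  rcases merge_adj_char h with ⟨a,b,hx,hy,hab⟩|⟨a,b,hx,hy,hab⟩|⟨hx,b,hy,hab⟩|⟨hy,b,hx,hab⟩
  all_goals subst hx; subst hy; simp [hab, hab.symm]

variable (hG₁ : G₁.Connected) (hG₂ : G₂.Connected)
include hG₁

lemma merge_dist_inl_inl (a b : V₁) :
    (mergeGraph G₁ G₂ u v).dist (inl a) (inl b) = G₁.dist a b := by
  obtain ⟨p, hp⟩ := hG₁.exists_walk_length_eq_dist a b
  obtain ⟨q, hq⟩ := exists_walk_map (G := G₁) inl (fun x y h => Or.inl (merge_adj_inl_inl h)) p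
  have hle : (mergeGraph G₁ G₂ u v).dist (inl a) (inl b) ≤ G₁.dist a b :=
    le_trans (SimpleGraph.dist_le q) (hp ▸ hq)
  refine le_antisymm hle ?_
  have hr : (mergeGraph G₁ G₂ u v).Reachable (inl a) (inl b) := ⟨q⟩
  obtain ⟨w, hw⟩ := hr.exists_walk_length_eq_dist
  obtain ⟨w', hw'⟩ := exists_walk_map (Sum.elim id (fun _ => u)) pi1_pseudo w
  simpa using le_trans (SimpleGraph.dist_le w') (hw ▸ hw')

include hG₂ in
omit hG₁ in
lemma merge_dist_iota2 (a b : V₂) :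
    (mergeGraph G₁ G₂ u v).dist (iota2 G₁ u v a) (iota2 G₁ u v b) = G₂.dist a b := by
  obtain ⟨p, hp⟩ := hG₂.exists_walk_length_eq_dist a b
  obtain ⟨q, hq⟩ := exists_walk_map (G := G₂) (iota2 G₁ u v)
    (fun x y h => Or.inl (merge_adj_iota2 h)) p
  have hle := le_trans (SimpleGraph.dist_le q) (hp ▸ hq)
  refine le_antisymm hle ?_
  have hr : (mergeGraph G₁ G₂ u v).Reachable (iota2 G₁ u v a) (iota2 G₁ u v b) := ⟨q⟩
  obtain ⟨w, hw⟩ := hr.exists_walk_length_eq_dist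
  obtain ⟨w', hw'⟩ := exists_walk_map (Sum.elim (fun _ => v) Subtype.val) pi2_pseudo w
  have h1 : ∀ c : V₂, Sum.elim (fun _ => v) (Subtype.val) (iota2 G₁ u v c) = c := by
    intro c; unfold iota2; by_cases h : c = v <;> simp [h]
  have key : G₂.dist a b ≤ w'.length := by
    have := SimpleGraph.dist_le (w'.copy (h1 a) (h1 b))
    rwa [SimpleGraph.Walk.length_copy] at this
  exact le_trans key (hw ▸ hw')


omit hG₁ in
include hG₂ in
lemma merge_dist_inr_inr (a b : {y : V₂ // y ≠ v}) :
    (mergeGraph G₁ G₂ u v).dist (inr a) (inr b) = G₂.dist a.1 b.1 := by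
  have := merge_dist_iota2 (G₁ := G₁) (u := u) (v := v) hG₂ a.1 b.1
  rwa [iota2, iota2, dif_neg a.2, dif_neg b.2] at this

omit hG₁ in
include hG₂ in
lemma merge_dist_inl_u_inr (b : {y : V₂ // y ≠ v}) :
    (mergeGraph G₁ G₂ u v).dist (inl u) (inr b) = G₂.dist v b.1 := by
  have := merge_dist_iota2 (G₁ := G₁) (u := u) (v := v) hG₂ v b.1
  rwa [iota2, iota2, dif_pos rfl, dif_neg b.2] at this

omit hG₁ in
lemma merge_cut :
    ∀ {x y : V₁ ⊕ {y : V₂ // y ≠ v}} (w : (mergeGraph G₁ G₂ u v).Walk x y) (a : V₁)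
      (b : {y : V₂ // y ≠ v}), x = inl a → y = inr b → inl u ∈ w.support := by
  intro x y w
  induction w with
  | nil => intro a b h h'; rw [h] at h'; exact absurd h' (by simp)
  | @cons x z _ h p ih =>
    intro a b hx hy
    subst hx; subst hy
    by_cases hau : a = u
    · subst hau; exact SimpleGraph.Walk.start_mem_support _
    · have hz : ∃ a', z = inl a' := by
        rcases merge_adj_char h with ⟨a',b',h1,h2,_⟩|⟨a',b',h1,_,_⟩|⟨h1,b',h2,_⟩|⟨h1,b',h2,_⟩
        · exact ⟨b', h2⟩
        · exact absurd h1 (by simp)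
        · exact absurd (Sum.inl.inj h1) hau
        · exact absurd h2 (by simp)
      obtain ⟨a', hz⟩ := hz
      rw [SimpleGraph.Walk.support_cons]
      exact List.mem_cons_of_mem _ (ih a' b hz rfl)

include hG₂ in
lemma merge_connected : (mergeGraph G₁ G₂ u v).Connected := by
  rw [SimpleGraph.connected_iff_exists_forall_reachable]
  refine ⟨inl u, ?_⟩
  rintro (a | b)
  · obtain ⟨p⟩ := hG₁ u a
    obtain ⟨q, -⟩ := exists_walk_map (G := G₁) inl
      (fun x y h => Or.inl (merge_adj_inl_inl (G₂ := G₂) (v := v) h)) p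
    exact ⟨q⟩
  · obtain ⟨p⟩ := hG₂ v b.1
    obtain ⟨q, -⟩ := exists_walk_map (G := G₂) (iota2 G₁ u v)
      (fun x y h => Or.inl (merge_adj_iota2 h)) p
    exact ⟨q.copy (by rw [iota2, dif_pos rfl]) (by rw [iota2, dif_neg b.2])⟩

include hG₂ in
lemma merge_dist_inl_inr (a : V₁) (b : {y : V₂ // y ≠ v}) :
    (mergeGraph G₁ G₂ u v).dist (inl a) (inr b) = G₁.dist a u + G₂.dist v b.1 := by
  classical
  have h1 := merge_dist_inl_inl (G₂ := G₂) (v := v) (u := u) hG₁ a u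
  have h2 := merge_dist_inl_u_inr (G₁ := G₁) (u := u) hG₂ b
  have hconn := merge_connected hG₁ hG₂ (u := u) (v := v)
  obtain ⟨r, hr⟩ := hconn.exists_walk_length_eq_dist (inl a) (inr b)
  refine le_antisymm ?_ ?_
  · calc (mergeGraph G₁ G₂ u v).dist (inl a) (inr b)
        ≤ _ + _ := hconn.dist_triangle (v := inl u)
      _ = _ := by rw [h1, h2]
  · have hmem : inl u ∈ r.support := merge_cut r a b rfl rfl
    have hspec := r.take_spec hmem
    have hlen : (r.takeUntil _ hmem).length + (r.dropUntil _ hmem).length = r.length := by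
      rw [← SimpleGraph.Walk.length_append, hspec]
    have d1 : (mergeGraph G₁ G₂ u v).dist (inl a) (inl u) ≤ (r.takeUntil _ hmem).length :=
      SimpleGraph.dist_le _
    have d2 : (mergeGraph G₁ G₂ u v).dist (inl u) (inr b) ≤ (r.dropUntil _ hmem).length :=
      SimpleGraph.dist_le _
    rw [← h1, ← h2, ← hr, ← hlen]
    omega

end Aux

section Main

open Finset

variable {V₂ : Type*} [Fintype V₂] [DecidableEq V₂] {v : V₂}

lemma sum_split_v (f : V₂ → ℝ) : ∑ c, f c = f v + ∑ c : {y : V₂ // y ≠ v}, f c.1 := by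
  classical
  rw [← Finset.sum_erase_add Finset.univ f (Finset.mem_univ v), add_comm]
  congr 1
  rw [Finset.sum_subtype (p := fun y => y ≠ v) _ (by simp) f]

end Main

/-- If neither `D₁x = 𝟏` nor `D₂x = 𝟏` has a solution, then after merging
`G₁` and `G₂` at a vertex (adding the edge `{u,v}` and contracting it) the linear system
`D_H x = 𝟏` has no solution either. -/
theorem stmt_16 {V₁ V₂ : Type*} [Fintype V₁] [Fintype V₂] [DecidableEq V₂]
    (G₁ : SimpleGraph V₁) (G₂ : SimpleGraph V₂)
    (hG₁ : G₁.Connected) (hG₂ : G₂.Connected)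
    (D₁ : Matrix V₁ V₁ ℝ) (hD₁ : ∀ a b, D₁ a b = (G₁.dist a b : ℝ))
    (D₂ : Matrix V₂ V₂ ℝ) (hD₂ : ∀ a b, D₂ a b = (G₂.dist a b : ℝ))
    (h₁ : ¬ ∃ x : V₁ → ℝ, D₁.mulVec x = fun _ => (1 : ℝ))
    (h₂ : ¬ ∃ x : V₂ → ℝ, D₂.mulVec x = fun _ => (1 : ℝ))
    (u : V₁) (v : V₂) :
    ¬ ∃ x : V₁ ⊕ {y : V₂ // y ≠ v} → ℝ,
      (Matrix.of fun a b => ((mergeGraph G₁ G₂ u v).dist a b : ℝ)).mulVec x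
        = fun _ => (1 : ℝ) := by
  classical
  rintro ⟨x, hx⟩
  set S : ℝ := ∑ b : {y : V₂ // y ≠ v}, x (inr b) with hS
  set S₁ : ℝ := ∑ a : V₁, x (inl a) with hS₁
  set C : ℝ := ∑ b : {y : V₂ // y ≠ v}, (G₂.dist v b.1 : ℝ) * x (inr b) with hC
  set C' : ℝ := ∑ a : V₁, (G₁.dist a u : ℝ) * x (inl a) with hC'
  have hrow : ∀ c, ∑ c', ((mergeGraph G₁ G₂ u v).dist c c' : ℝ) * x c' = 1 := by
    intro c
    have := congrFun hx c
    simpa [Matrix.mulVec, dotProduct] using this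
  -- row at a left vertex
  have rowL : ∀ a : V₁,
      (∑ a' : V₁, (G₁.dist a a' : ℝ) * x (inl a')) + (G₁.dist a u : ℝ) * S + C = 1 := by
    intro a
    have h := hrow (inl a)
    rw [Fintype.sum_sum_type] at h
    have e1 : ∀ a' : V₁,
        ((mergeGraph G₁ G₂ u v).dist (inl a) (inl a') : ℝ) * x (inl a')
          = (G₁.dist a a' : ℝ) * x (inl a') := by
      intro a'; rw [merge_dist_inl_inl (G₂ := G₂) (v := v) (u := u) hG₁]
    have e2 : ∀ b : {y : V₂ // y ≠ v},
        ((mergeGraph G₁ G₂ u v).dist (inl a) (inr b) : ℝ) * x (inr b)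
          = (G₁.dist a u : ℝ) * x (inr b) + (G₂.dist v b.1 : ℝ) * x (inr b) := by
      intro b
      rw [merge_dist_inl_inr hG₁ hG₂]
      push_cast
      ring
    rw [Finset.sum_congr rfl (fun a' _ => e1 a'), Finset.sum_congr rfl (fun b _ => e2 b),
      Finset.sum_add_distrib, ← Finset.mul_sum] at h
    linarith [h]
  -- row at a right vertex
  have rowR : ∀ b : {y : V₂ // y ≠ v},
      C' + (G₂.dist v b.1 : ℝ) * S₁
        + (∑ c : {y : V₂ // y ≠ v}, (G₂.dist b.1 c.1 : ℝ) * x (inr c)) = 1 := by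
    intro b
    have h := hrow (inr b)
    rw [Fintype.sum_sum_type] at h
    have e1 : ∀ a : V₁,
        ((mergeGraph G₁ G₂ u v).dist (inr b) (inl a) : ℝ) * x (inl a)
          = (G₁.dist a u : ℝ) * x (inl a) + (G₂.dist v b.1 : ℝ) * x (inl a) := by
      intro a
      rw [SimpleGraph.dist_comm, merge_dist_inl_inr hG₁ hG₂]
      push_cast
      ring
    have e2 : ∀ c : {y : V₂ // y ≠ v},
        ((mergeGraph G₁ G₂ u v).dist (inr b) (inr c) : ℝ) * x (inr c)
          = (G₂.dist b.1 c.1 : ℝ) * x (inr c) := by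
      intro c; rw [merge_dist_inr_inr (G₁ := G₁) (u := u) hG₂]
    rw [Finset.sum_congr rfl (fun a _ => e1 a), Finset.sum_congr rfl (fun c _ => e2 c),
      Finset.sum_add_distrib, ← Finset.mul_sum] at h
    linarith [h]
  -- the two constants sum to 1 (row at the merged vertex)
  have hCC' : C' + C = 1 := by
    have h := rowL u
    have : (∑ a' : V₁, (G₁.dist u a' : ℝ) * x (inl a')) = C' := by
      rw [hC']
      exact Finset.sum_congr rfl (fun a _ => by rw [SimpleGraph.dist_comm])
    rw [this] at h
    simp [SimpleGraph.dist_self] at h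
    linarith [h]
  -- the transported solution on V₁
  set y : V₁ → ℝ := fun a => x (inl a) + (if a = u then S else 0) with hy
  have key1 : ∀ a, D₁.mulVec y a = 1 - C := by
    intro a
    have : D₁.mulVec y a
        = (∑ a' : V₁, (G₁.dist a a' : ℝ) * x (inl a')) + (G₁.dist a u : ℝ) * S := by
      rw [Matrix.mulVec, dotProduct]
      simp only [hy, hD₁, mul_add, Finset.sum_add_distrib, mul_ite, mul_zero]
      rw [Finset.sum_ite_eq' Finset.univ u (fun a' => (G₁.dist a a' : ℝ) * S)]
      simp
    rw [this]
    linarith [rowL a]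
  -- the transported solution on V₂
  set z : V₂ → ℝ := fun b => if h : b = v then S₁ else x (inr ⟨b, h⟩) with hz
  have key2 : ∀ b, D₂.mulVec z b = C := by
    have hzval : ∀ c : {y : V₂ // y ≠ v}, z c.1 = x (inr c) := by
      intro c; rw [hz]; simp only [dif_neg c.2]
    have hmv : ∀ b : V₂, D₂.mulVec z b
        = (G₂.dist b v : ℝ) * S₁ + ∑ c : {y : V₂ // y ≠ v}, (G₂.dist b c.1 : ℝ) * x (inr c) := by
      intro b
      rw [Matrix.mulVec, dotProduct]
      rw [sum_split_v (f := fun c => D₂ b c * z c)]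
      have hv : D₂ b v * z v = (G₂.dist b v : ℝ) * S₁ := by
        rw [hD₂, hz]; simp
      rw [hv]
      congr 1
      exact Finset.sum_congr rfl (fun c _ => by rw [hD₂, hzval c])
    intro b
    by_cases hb : b = v
    · rw [hb, hmv v, SimpleGraph.dist_self]
      simp only [Nat.cast_zero, zero_mul, zero_add]
      exact hC.symm
    · have h := rowR ⟨b, hb⟩
      rw [hmv b, SimpleGraph.dist_comm (u := b) (v := v)]
      linarith [h, hCC']
  by_cases hC0 : C = 0
  · exact h₁ ⟨y, funext fun a => by rw [key1 a, hC0]; ring⟩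
  · refine h₂ ⟨C⁻¹ • z, funext fun b => ?_⟩
    rw [Matrix.mulVec_smul]
    simp only [Pi.smul_apply, key2 b, smul_eq_mul]
    exact inv_mul_cancel₀ hC0
end
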